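/- arXiv:2004.07712 — 3 statements merged into one kernel-verified Lean document; each statement's English description precedes it below -/
import Mathlib

section
/- Let d ≥ 1, let v : 𝕋^d → ℝ^d be a Lipschitz divergence-free vector field whose flow ψ is ergodic with respect to the normalized Lebesgue measure, and let φ : 𝕋^d → ℝ be a nonnegative integrable function with strictly positive average ⟨φ⟩ > 0. Let p ∈ [1,∞) and θ_0 ∈ L^p(𝕋^d), and let θ be the solution of the damped transport equation ∂_t θ + v·∇θ = −φ θ with θ(0,·) = θ_0, i.e. θ(t,ψ(t,x)) = θ_0(x) exp(−∫_0^t φ(ψ(τ,x)) dτ). Then ‖θ(t)‖_{L^p} → 0 as t → +∞. -/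
open MeasureTheory Filter Topology
open scoped ENNReal NNReal

noncomputable section

/-- The `d`-dimensional torus `ℝ^d/ℤ^d`, equipped with the normalized Lebesgue (Haar)
measure `volume`. -/
abbrev Torus (d : ℕ) := Fin d → AddCircle (1 : ℝ)

/-- The canonical projection `ℝ^d → 𝕋^d`. -/
def Torus.proj (d : ℕ) (y : Fin d → ℝ) : Torus d := fun i => (y i : AddCircle (1 : ℝ))

/-- `ψ : ℝ × 𝕋^d → 𝕋^d` is the flow of the (autonomous) vector field `v : 𝕋^d → ℝ^d`:
it is a one-parameter group of transformations, `ψ(0,x) = x`, and for every `x` the orbit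
`t ↦ ψ(t,x)` lifts to a curve `X : ℝ → ℝ^d` solving the ODE `Ẋ(t) = v(ψ(t,x))`,
i.e. `∂_t ψ(t,x) = v(ψ(t,x))`. -/
def IsFlowOf (d : ℕ) (v : Torus d → Fin d → ℝ) (ψ : ℝ → Torus d → Torus d) : Prop :=
  (∀ x, ψ 0 x = x) ∧ (∀ s t : ℝ, ψ t ∘ ψ s = ψ (t + s)) ∧
    ∀ x : Torus d, ∃ X : ℝ → Fin d → ℝ,
      (∀ t : ℝ, Torus.proj d (X t) = ψ t x) ∧ ∀ t : ℝ, HasDerivAt X (v (ψ t x)) t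

/-- **Theorem 2.2 (i): decay of the energy for ergodic flows.**
Let `d ≥ 1`, let `v : 𝕋^d → ℝ^d` be a Lipschitz divergence-free vector field (so its flow `ψ`
preserves the Lebesgue measure) whose flow is ergodic, and let `φ ≥ 0` be integrable with
`⟨φ⟩ > 0`.  Let `p ∈ [1,∞)`, `θ₀ ∈ L^p(𝕋^d)`, and let `θ` be the solution of
`∂_t θ + v·∇θ = -φ θ`, `θ(0,·) = θ₀`, given along characteristics by
`θ(t,ψ(t,x)) = θ₀(x) exp(-∫_0^t φ(ψ(τ,x)) dτ)`.  Then `‖θ(t)‖_{L^p} → 0` as `t → +∞`. -/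
theorem transport_damped_ergodic_decay
    (d : ℕ) (hd : 1 ≤ d)
    (v : Torus d → Fin d → ℝ) (K : NNReal) (hv : LipschitzWith K v)
    (ψ : ℝ → Torus d → Torus d) (hflow : IsFlowOf d v ψ)
    -- `v` is divergence free: the flow preserves the normalized Lebesgue measure
    (hψmp : ∀ t : ℝ, MeasurePreserving (ψ t) volume volume)
    -- the flow is ergodic
    (hψerg : ∀ A : Set (Torus d), MeasurableSet A → (∀ t : ℝ, ψ t '' A = A) →
      volume A = 0 ∨ volume A = 1)
    (φ : Torus d → ℝ) (hφ0 : ∀ x, 0 ≤ φ x)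
    (hφint : Integrable φ (volume : Measure (Torus d)))
    (hφavg : 0 < ∫ x, φ x ∂(volume : Measure (Torus d)))
    (p : ℝ) (hp : 1 ≤ p)
    (θ₀ : Torus d → ℝ) (hθ₀ : MemLp θ₀ (ENNReal.ofReal p) (volume : Measure (Torus d)))
    (θ : ℝ → Torus d → ℝ)
    (hθ : ∀ t : ℝ, ∀ x : Torus d,
      θ t (ψ t x) = θ₀ x * Real.exp (-∫ τ in (0:ℝ)..t, φ (ψ τ x))) :
    Tendsto (fun t : ℝ => eLpNorm (θ t) (ENNReal.ofReal p) (volume : Measure (Torus d)))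
      atTop (𝓝 0) := by
  classical
  have hp0 : (0:ℝ) < p := lt_of_lt_of_le zero_lt_one hp
  have hp0' : (0:ℝ) ≤ p := hp0.le
  set μ : Measure (Torus d) := volume with hμdef
  have hμuniv : μ Set.univ = 1 := by
    rw [show μ = Measure.pi (fun _ : Fin d => volume) from rfl, Measure.pi_univ]
    simp [AddCircle.measure_univ]
  have hprob : IsProbabilityMeasure μ := ⟨hμuniv⟩
  obtain ⟨hψ0, hψgrp, hψode⟩ := hflow
  have hψcomp : ∀ (u τ : ℝ) (x : Torus d), ψ τ (ψ u x) = ψ (τ + u) x :=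
    fun u τ x => congrFun (hψgrp u τ) x
  -- continuity of orbits
  have hcont : ∀ x : Torus d, Continuous fun τ : ℝ => ψ τ x := by
    intro x
    obtain ⟨X, hX1, hX2⟩ := hψode x
    have hXc : Continuous X := by
      rw [continuous_iff_continuousAt]; exact fun t => (hX2 t).continuousAt
    have hproj : Continuous (Torus.proj d) := by
      apply continuous_pi; intro i
      exact continuous_quotient_mk'.comp (continuous_apply i)
    have heq : (fun τ : ℝ => ψ τ x) = (Torus.proj d) ∘ X := by
      funext τ; exact (hX1 τ).symm
    rw [heq]; exact hproj.comp hXc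
  -- joint measurability of the flow
  have hΨmeas : Measurable (Function.uncurry ψ) :=
    measurable_uncurry_of_continuous_of_measurable hcont fun t => (hψmp t).measurable
  -- measurable nonnegative representative of φ
  obtain ⟨φm, hφm_meas, hφm_ae⟩ := hφint.aemeasurable
  set φ' : Torus d → ℝ := fun y => max (φm y) 0 with hφ'def
  have hφ'meas : Measurable φ' := hφm_meas.max measurable_const
  have hφ'0 : ∀ y, 0 ≤ φ' y := fun y => le_max_right _ _
  have hφ'ae : φ =ᵐ[μ] φ' := by
    filter_upwards [hφm_ae] with y hy
    simp only [hφ'def, ← hy, max_eq_left (hφ0 y)]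
  have hφ'int : Integrable φ' μ := hφint.congr hφ'ae
  have hφ'avg : (0:ℝ) < ∫ y, φ' y ∂μ := by rwa [integral_congr_ae hφ'ae] at hφavg
  -- the constant c = ∫⁻ φ'
  set c : ℝ≥0∞ := ∫⁻ y, ENNReal.ofReal (φ' y) ∂μ with hcdef
  have hc_eq : c = ENNReal.ofReal (∫ y, φ' y ∂μ) :=
    (ofReal_integral_eq_lintegral_ofReal hφ'int (Filter.Eventually.of_forall hφ'0)).symm
  have hc_pos : 0 < c := by rw [hc_eq]; exact ENNReal.ofReal_pos.2 hφ'avg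
  have hc_ne_top : c ≠ ∞ := by rw [hc_eq]; exact ENNReal.ofReal_ne_top
  have hφ'lint : ∀ τ : ℝ, ∫⁻ x, ENNReal.ofReal (φ' (ψ τ x)) ∂μ = c :=
    fun τ => (hψmp τ).lintegral_comp (ENNReal.measurable_ofReal.comp hφ'meas)
  -- orbit-wise measurability
  have horbmeas : ∀ x : Torus d, Measurable fun τ : ℝ => ENNReal.ofReal (φ' (ψ τ x)) :=
    fun x => ENNReal.measurable_ofReal.comp (hφ'meas.comp (hcont x).measurable)
  have hswapmeas : Measurable fun q : Torus d × ℝ => ENNReal.ofReal (φ' (ψ q.2 q.1)) :=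
    ENNReal.measurable_ofReal.comp (hφ'meas.comp (hΨmeas.comp measurable_swap))
  -- tails
  set T : ℝ → Torus d → ℝ≥0∞ :=
    fun s x => ∫⁻ τ in Set.Ioi s, ENNReal.ofReal (φ' (ψ τ x)) with hTdef
  have hTmeas : ∀ s : ℝ, Measurable (T s) := by
    intro s
    exact Measurable.lintegral_prod_right
      (f := fun x τ => ENNReal.ofReal (φ' (ψ τ x))) hswapmeas
  -- partial integrals
  set Pt : ℝ → Torus d → ℝ≥0∞ :=
    fun t x => ∫⁻ τ in Set.Ioc 0 t, ENNReal.ofReal (φ' (ψ τ x)) with hPdef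
  have hPmeas : ∀ t : ℝ, Measurable (Pt t) := by
    intro t
    exact Measurable.lintegral_prod_right
      (f := fun x τ => ENNReal.ofReal (φ' (ψ τ x))) hswapmeas
  -- translation of lintegrals on tails
  have hshift : ∀ (g : ℝ → ℝ≥0∞), Measurable g → ∀ s u : ℝ,
      (∫⁻ τ in Set.Ioi s, g (τ + u)) = ∫⁻ τ in Set.Ioi (s + u), g τ := by
    intro g hg s u
    have h1 : (volume : Measure ℝ).restrict (Set.Ioi (s + u)) =
        Measure.map (· + u) ((volume : Measure ℝ).restrict (Set.Ioi s)) := by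
      conv_lhs => rw [← map_add_right_eq_self (volume : Measure ℝ) u]
      rw [Measure.restrict_map (measurable_add_const u) measurableSet_Ioi]
      congr 1
      rw [Set.preimage_add_const_Ioi]
      congr 1
      ring
    rw [h1, lintegral_map hg (measurable_add_const u)]
  have hT_shift : ∀ (u s : ℝ) (x : Torus d), T s (ψ u x) = T (s + u) x := by
    intro u s x
    calc T s (ψ u x) = ∫⁻ τ in Set.Ioi s, ENNReal.ofReal (φ' (ψ (τ + u) x)) := by
          simp only [hTdef]
          exact lintegral_congr fun τ => by rw [hψcomp]
      _ = ∫⁻ τ in Set.Ioi (s + u), ENNReal.ofReal (φ' (ψ τ x)) := hshift _ (horbmeas x) s u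
      _ = T (s + u) x := rfl
  have hT_split : ∀ (s : ℝ) (x : Torus d), 0 ≤ s → T 0 x = Pt s x + T s x := by
    intro s x hs
    simp only [hTdef, hPdef]
    rw [← lintegral_union measurableSet_Ioi (Set.Ioc_disjoint_Ioi le_rfl),
      Set.Ioc_union_Ioi_eq_Ioi hs]
  -- the invariant set A
  set A : Set (Torus d) := ⋃ n : ℕ, {x | T (n : ℝ) x < ∞} with hAdef
  have hAmeas : MeasurableSet A :=
    MeasurableSet.iUnion fun n => measurableSet_lt (hTmeas _) measurable_const
  have hmemA : ∀ x, x ∈ A ↔ ∃ s : ℝ, T s x < ∞ := by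
    intro x
    constructor
    · intro hx
      obtain ⟨n, hn⟩ := Set.mem_iUnion.1 hx
      exact ⟨n, hn⟩
    · rintro ⟨s, hs⟩
      obtain ⟨n, hn⟩ := exists_nat_ge s
      refine Set.mem_iUnion.2 ⟨n, lt_of_le_of_lt ?_ hs⟩
      exact lintegral_mono_set (Set.Ioi_subset_Ioi hn)
  have hAinv : ∀ t : ℝ, ψ t '' A = A := by
    intro t
    have hiff : ∀ x, x ∈ A ↔ ψ t x ∈ A := by
      intro x
      rw [hmemA, hmemA]
      constructor
      · rintro ⟨s, hs⟩
        refine ⟨s - t, ?_⟩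
        rw [hT_shift t (s - t) x, sub_add_cancel]
        exact hs
      · rintro ⟨s, hs⟩
        rw [hT_shift t s x] at hs
        exact ⟨s + t, hs⟩
    apply Set.Subset.antisymm
    · rintro y ⟨x, hx, rfl⟩
      exact (hiff x).1 hx
    · intro y hy
      refine ⟨ψ (-t) y, (hiff (ψ (-t) y)).2 ?_, ?_⟩
      · rw [hψcomp (-t) t y, add_neg_cancel, hψ0]; exact hy
      · rw [hψcomp (-t) t y, add_neg_cancel, hψ0]
  -- a.e. finiteness of partial integrals
  have hfin : ∀ n : ℕ, ∀ᵐ x ∂μ, Pt (n : ℝ) x < ∞ := by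
    intro n
    apply ae_lt_top (hPmeas _)
    have hswap : ∫⁻ x, Pt (n : ℝ) x ∂μ
        = ∫⁻ τ in Set.Ioc (0:ℝ) n, ∫⁻ x, ENNReal.ofReal (φ' (ψ τ x)) ∂μ := by
      simp only [hPdef]
      exact lintegral_lintegral_swap hswapmeas.aemeasurable
    rw [hswap]
    have : ∫⁻ τ in Set.Ioc (0:ℝ) n, (∫⁻ x, ENNReal.ofReal (φ' (ψ τ x)) ∂μ)
        = ∫⁻ _ in Set.Ioc (0:ℝ) n, c := lintegral_congr fun τ => hφ'lint τ
    rw [this, lintegral_const]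
    exact ENNReal.mul_ne_top hc_ne_top (by simp)
  -- a.e. equality of φ and φ' along orbits
  have horb_ae : ∀ᵐ x ∂μ, ∀ᵐ τ ∂(volume : Measure ℝ), φ (ψ τ x) = φ' (ψ τ x) := by
    have h0 : μ {y | ¬ φ y = φ' y} = 0 := hφ'ae
    obtain ⟨N, hN_sub, hN_meas, hN_null⟩ := exists_measurable_superset_of_null h0
    have hS'meas : MeasurableSet {z : Torus d × ℝ | ψ z.2 z.1 ∈ N} :=
      (hΨmeas.comp measurable_swap) hN_meas
    have hprodnull : (μ.prod (volume : Measure ℝ)) {z : Torus d × ℝ | ψ z.2 z.1 ∈ N} = 0 := by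
      rw [← Measure.prod_swap, Measure.map_apply measurable_swap hS'meas]
      have hpre : Prod.swap ⁻¹' {z : Torus d × ℝ | ψ z.2 z.1 ∈ N}
          = {z : ℝ × Torus d | ψ z.1 z.2 ∈ N} := rfl
      rw [hpre]
      have hmeas2 : MeasurableSet {z : ℝ × Torus d | ψ z.1 z.2 ∈ N} := hΨmeas hN_meas
      rw [Measure.prod_apply hmeas2]
      have hzero : ∀ τ : ℝ, μ (Prod.mk τ ⁻¹' {z : ℝ × Torus d | ψ z.1 z.2 ∈ N}) = 0 := by
        intro τ
        have heq : (Prod.mk τ ⁻¹' {z : ℝ × Torus d | ψ z.1 z.2 ∈ N}) = ψ τ ⁻¹' N := rfl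
        rw [heq, (hψmp τ).measure_preimage hN_meas.nullMeasurableSet]
        exact hN_null
      rw [lintegral_congr hzero, lintegral_zero]
    have hae := measure_eq_zero_iff_ae_notMem.1 hprodnull
    have := Measure.ae_ae_of_ae_prod hae
    filter_upwards [this] with x hx
    filter_upwards [hx] with τ hτ
    by_contra hne
    exact hτ (hN_sub hne)
  -- ergodicity forces μ A = 0
  have hA0 : μ A = 0 := by
    rcases hψerg A hAmeas hAinv with h | h
    · exact h
    · exfalso
      have hAae : ∀ᵐ x ∂μ, x ∈ A := by
        have hcompl : μ Aᶜ = 0 := by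
          rw [measure_compl hAmeas (measure_ne_top μ A), hμuniv, h, tsub_self]
        filter_upwards [measure_eq_zero_iff_ae_notMem.1 hcompl] with x hx
        simpa using hx
      have hgood : ∀ᵐ x ∂μ, T (0:ℝ) x < ∞ := by
        filter_upwards [hAae, ae_all_iff.2 hfin] with x hxA hxfin
        obtain ⟨s, hs⟩ := (hmemA x).1 hxA
        obtain ⟨n, hn⟩ := exists_nat_ge s
        have hTn : T (n : ℝ) x < ∞ :=
          lt_of_le_of_lt (lintegral_mono_set (Set.Ioi_subset_Ioi hn)) hs
        rw [hT_split (n : ℝ) x (Nat.cast_nonneg n)]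
        exact ENNReal.add_lt_top.2 ⟨hxfin n, hTn⟩
      -- T n x → 0 a.e.
      have hT0 : ∀ᵐ x ∂μ, Tendsto (fun n : ℕ => T (n : ℝ) x) atTop (𝓝 0) := by
        filter_upwards [hgood] with x hx
        set ν : Measure ℝ := volume.withDensity fun τ => ENNReal.ofReal (φ' (ψ τ x)) with hνdef
        have hν : ∀ s : ℝ, ν (Set.Ioi s) = T s x := fun s =>
          withDensity_apply _ measurableSet_Ioi
        have hanti : Antitone fun n : ℕ => Set.Ioi (n : ℝ) := fun m n hmn =>
          Set.Ioi_subset_Ioi (Nat.cast_le.2 hmn)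
        have hiInter : (⋂ n : ℕ, Set.Ioi (n : ℝ)) = ∅ := by
          ext τ
          simp only [Set.mem_iInter, Set.mem_Ioi, Set.mem_empty_iff_false, iff_false, not_forall,
            not_lt]
          obtain ⟨n, hn⟩ := exists_nat_gt τ
          exact ⟨n, hn.le⟩
        have htend := tendsto_measure_iInter_atTop
          (μ := ν) (s := fun n : ℕ => Set.Ioi (n : ℝ))
          (fun n => measurableSet_Ioi.nullMeasurableSet) hanti
          ⟨0, by show ν (Set.Ioi ((0:ℕ):ℝ)) ≠ ⊤
                 rw [Nat.cast_zero, hν 0]; exact hx.ne⟩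
        rw [hiInter] at htend
        simp only [measure_empty] at htend
        have : (fun n : ℕ => T (n : ℝ) x) = fun n : ℕ => ν (Set.Ioi (n : ℝ)) := by
          funext n; rw [hν]
        rw [this]
        exact htend
      -- the truncated integrals are constant in n and tend to 0
      have hconst : ∀ n : ℕ, (∫⁻ x, min (T (n : ℝ) x) 1 ∂μ) = ∫⁻ x, min (T 0 x) 1 ∂μ := by
        intro n
        have heq : ∀ x, min (T (n : ℝ) x) 1 = min (T 0 (ψ (n : ℝ) x)) 1 := by
          intro x; rw [hT_shift (n : ℝ) 0 x, zero_add]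
        rw [lintegral_congr heq,
          (hψmp (n : ℝ)).lintegral_comp ((hTmeas 0).min measurable_const)]
      have hlim : Tendsto (fun n : ℕ => ∫⁻ x, min (T (n : ℝ) x) 1 ∂μ) atTop (𝓝 0) := by
        have hdct := tendsto_lintegral_of_dominated_convergence (μ := μ)
          (F := fun (n : ℕ) x => min (T (n : ℝ) x) 1) (f := fun _ => 0) (bound := fun _ => 1)
          (fun n => (hTmeas _).min measurable_const)
          (fun n => Filter.Eventually.of_forall fun x => min_le_right _ _)
          (by simp [hμuniv])
          ?_
        · simpa using hdct
        · filter_upwards [hT0] with x hx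
          exact tendsto_of_tendsto_of_tendsto_of_le_of_le tendsto_const_nhds hx
            (fun n => zero_le) (fun n => min_le_left _ _)
      have hI0 : (∫⁻ x, min (T 0 x) 1 ∂μ) = 0 := by
        have : Tendsto (fun _ : ℕ => ∫⁻ x, min (T 0 x) 1 ∂μ) atTop
            (𝓝 (∫⁻ x, min (T 0 x) 1 ∂μ)) := tendsto_const_nhds
        refine tendsto_nhds_unique ?_ hlim
        exact this.congr fun n => (hconst n).symm
      have hT0zero : ∀ᵐ x ∂μ, T 0 x = 0 := by
        have := (lintegral_eq_zero_iff ((hTmeas 0).min measurable_const)).1 hI0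
        filter_upwards [this] with x hx
        rcases le_total (T 0 x) 1 with hle | hle
        · rwa [min_eq_left hle] at hx
        · rw [min_eq_right hle] at hx
          exact absurd hx one_ne_zero
      -- but then ∫⁻ T 0 = 0, contradicting positivity of the average
      have hTint0 : (∫⁻ x, T 0 x ∂μ) = 0 := by
        rw [lintegral_congr_ae (hT0zero.mono fun x hx => hx)]
        exact lintegral_zero
      have hge : c ≤ ∫⁻ x, T 0 x ∂μ := by
        have h1 : (∫⁻ x, Pt 1 x ∂μ) ≤ ∫⁻ x, T 0 x ∂μ := by
          apply lintegral_mono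
          intro x
          exact lintegral_mono_set (fun τ hτ => hτ.1)
        refine le_trans (le_of_eq ?_) h1
        have hswap : ∫⁻ x, Pt 1 x ∂μ
            = ∫⁻ τ in Set.Ioc (0:ℝ) 1, ∫⁻ x, ENNReal.ofReal (φ' (ψ τ x)) ∂μ := by
          simp only [hPdef]
          exact lintegral_lintegral_swap hswapmeas.aemeasurable
        rw [hswap]
        have : ∫⁻ τ in Set.Ioc (0:ℝ) 1, (∫⁻ x, ENNReal.ofReal (φ' (ψ τ x)) ∂μ)
            = ∫⁻ _ in Set.Ioc (0:ℝ) 1, c := lintegral_congr fun τ => hφ'lint τ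
        rw [this, lintegral_const]
        simp [Real.volume_Ioc]
      rw [hTint0] at hge
      exact hc_pos.ne' (le_antisymm hge zero_le)
  -- hence a.e. T 0 x = ∞
  have hTtop : ∀ᵐ x ∂μ, T 0 x = ∞ := by
    have hnA : ∀ᵐ x ∂μ, x ∉ A := measure_eq_zero_iff_ae_notMem.1 hA0
    filter_upwards [hnA] with x hx
    by_contra h
    exact hx ((hmemA x).2 ⟨0, lt_top_iff_ne_top.2 h⟩)
  -- real-valued partial integrals
  set ρ : ℝ → Torus d → ℝ := fun t x => (Pt t x).toReal with hρdef
  have hρmeas : ∀ t : ℝ, Measurable (ρ t) := fun t => (hPmeas t).ennreal_toReal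
  have hρ0 : ∀ (t : ℝ) (x : Torus d), 0 ≤ ρ t x := fun t x => ENNReal.toReal_nonneg
  -- full-measure set of good points
  have hgoodset : ∀ᵐ x ∂μ,
      (∀ n : ℕ, Pt (n : ℝ) x < ∞) ∧
      (∀ᵐ τ ∂(volume : Measure ℝ), φ (ψ τ x) = φ' (ψ τ x)) ∧ T 0 x = ∞ := by
    filter_upwards [ae_all_iff.2 hfin, horb_ae, hTtop] with x h1 h2 h3
    exact ⟨h1, h2, h3⟩
  have hPfin : ∀ x, (∀ n : ℕ, Pt (n:ℝ) x < ∞) → ∀ t : ℝ, Pt t x < ∞ := by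
    intro x hx t
    obtain ⟨n, hn⟩ := exists_nat_ge t
    exact lt_of_le_of_lt (lintegral_mono_set (Set.Ioc_subset_Ioc_right hn)) (hx n)
  have hρmono : ∀ x, (∀ n : ℕ, Pt (n:ℝ) x < ∞) → ∀ s t : ℝ, s ≤ t → ρ s x ≤ ρ t x := by
    intro x hx s t hst
    exact ENNReal.toReal_mono (hPfin x hx t).ne
      (lintegral_mono_set (Set.Ioc_subset_Ioc_right hst))
  have hρR : ∀ x, (∀ᵐ τ ∂(volume : Measure ℝ), φ (ψ τ x) = φ' (ψ τ x)) →
      ∀ t : ℝ, 0 ≤ t → (∫ τ in (0:ℝ)..t, φ (ψ τ x)) = ρ t x := by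
    intro x hx t ht
    rw [intervalIntegral.integral_of_le ht,
      integral_congr_ae (ae_restrict_of_ae hx),
      integral_eq_lintegral_of_nonneg_ae
        (Filter.Eventually.of_forall fun τ => hφ'0 _)
        (hφ'meas.comp (hcont x).measurable).aestronglyMeasurable]
  have hρtop : ∀ x, (∀ n : ℕ, Pt (n:ℝ) x < ∞) → T 0 x = ∞ →
      Tendsto (fun t : ℝ => ρ t x) atTop atTop := by
    intro x hx hT
    have hsup : (⨆ n : ℕ, Pt (n:ℝ) x) = T 0 x := by
      set ν : Measure ℝ := volume.withDensity fun τ => ENNReal.ofReal (φ' (ψ τ x)) with hνdef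
      have hmono : Monotone fun n : ℕ => Set.Ioc (0:ℝ) (n:ℝ) := fun m n h =>
        Set.Ioc_subset_Ioc_right (Nat.cast_le.2 h)
      have hum := hmono.measure_iUnion (μ := ν)
      have hU : (⋃ n : ℕ, Set.Ioc (0:ℝ) (n:ℝ)) = Set.Ioi 0 := by
        ext τ
        simp only [Set.mem_iUnion, Set.mem_Ioc, Set.mem_Ioi]
        constructor
        · rintro ⟨n, h1, _⟩; exact h1
        · intro h; obtain ⟨n, hn⟩ := exists_nat_ge τ; exact ⟨n, h, hn⟩
      rw [hU] at hum
      calc (⨆ n : ℕ, Pt (n:ℝ) x)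
          = ⨆ n : ℕ, ν (Set.Ioc (0:ℝ) (n:ℝ)) := by
            refine iSup_congr fun n => ?_
            rw [hνdef, withDensity_apply _ measurableSet_Ioc]
        _ = ν (Set.Ioi 0) := hum.symm
        _ = T 0 x := by rw [hνdef, withDensity_apply _ measurableSet_Ioi]
    rw [tendsto_atTop_atTop]
    intro b
    have hlt : ENNReal.ofReal b < ⨆ n : ℕ, Pt (n:ℝ) x := by
      rw [hsup, hT]; exact ENNReal.ofReal_lt_top
    obtain ⟨n, hn⟩ := lt_iSup_iff.1 hlt
    refine ⟨(n : ℝ), fun t ht => ?_⟩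
    have hb : b ≤ ρ (n:ℝ) x := (ENNReal.ofReal_le_iff_le_toReal (hx n).ne).1 hn.le
    exact le_trans hb (hρmono x hx (n:ℝ) t ht)
  -- measurable representative of θ₀
  obtain ⟨θ₀m, hθ₀m_sm, hθ₀m_ae⟩ := hθ₀.1
  have hθ₀m_meas : Measurable θ₀m := hθ₀m_sm.measurable
  set q : ℝ≥0∞ := ENNReal.ofReal p with hqdef
  have hq0 : q ≠ 0 := by
    simp only [hqdef, ne_eq, ENNReal.ofReal_eq_zero, not_le]
    exact hp0
  have hqtop : q ≠ ∞ := ENNReal.ofReal_ne_top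
  have hqtoReal : q.toReal = p := ENNReal.toReal_ofReal hp0'
  set B : Torus d → ℝ≥0∞ := fun x => (‖θ₀m x‖₊ : ℝ≥0∞) ^ p with hBdef
  have hBmeas : Measurable B :=
    ENNReal.continuous_rpow_const.measurable.comp hθ₀m_meas.nnnorm.coe_nnreal_ennreal
  have hBne : ∀ x, B x ≠ ∞ := fun x => ENNReal.rpow_ne_top_of_nonneg hp0' ENNReal.coe_ne_top
  have hBfin : (∫⁻ x, B x ∂μ) ≠ ∞ := by
    have h1 : eLpNorm θ₀ q μ < ∞ := hθ₀.eLpNorm_lt_top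
    rw [eLpNorm_eq_lintegral_rpow_enorm_toReal hq0 hqtop, hqtoReal] at h1
    have h2 : (∫⁻ x, (‖θ₀ x‖₊ : ℝ≥0∞) ^ p ∂μ) ≠ ∞ := by
      intro hcontra
      rw [show (∫⁻ x, ‖θ₀ x‖ₑ ^ p ∂μ) = ∞ from hcontra, ENNReal.top_rpow_of_pos (by positivity)] at h1
      exact lt_irrefl _ h1
    have h3 : (∫⁻ x, (‖θ₀ x‖₊ : ℝ≥0∞) ^ p ∂μ) = ∫⁻ x, B x ∂μ := by
      apply lintegral_congr_ae
      filter_upwards [hθ₀m_ae] with x hx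
      simp only [hBdef, hx]
    rwa [← h3]
  set G : ℝ → Torus d → ℝ≥0∞ :=
    fun t x => B x * ENNReal.ofReal (Real.exp (-(p * ρ t x))) with hGdef
  have hGmeas : ∀ t : ℝ, Measurable (G t) := by
    intro t
    exact hBmeas.mul
      (ENNReal.measurable_ofReal.comp (Real.measurable_exp.comp ((hρmeas t).const_mul p).neg))
  have hGbound : ∀ (t : ℝ) (x : Torus d), G t x ≤ B x := by
    intro t x
    have h1 : Real.exp (-(p * ρ t x)) ≤ 1 := by
      rw [← Real.exp_zero]
      exact Real.exp_le_exp.2 (neg_nonpos.2 (mul_nonneg hp0' (hρ0 t x)))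
    calc G t x ≤ B x * 1 := mul_le_mul_right (ENNReal.ofReal_le_one.2 h1) _
      _ = B x := mul_one _
  have hGlim : ∀ᵐ x ∂μ, Tendsto (fun t : ℝ => G t x) atTop (𝓝 0) := by
    filter_upwards [hgoodset] with x hx
    obtain ⟨h1, h2, h3⟩ := hx
    have hρt : Tendsto (fun t => ρ t x) atTop atTop := hρtop x h1 h3
    have hexp : Tendsto (fun t => Real.exp (-(p * ρ t x))) atTop (𝓝 0) :=
      Real.tendsto_exp_atBot.comp (tendsto_neg_atTop_atBot.comp (hρt.const_mul_atTop hp0))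
    have hof : Tendsto (fun t => ENNReal.ofReal (Real.exp (-(p * ρ t x)))) atTop (𝓝 0) := by
      have := (ENNReal.continuous_ofReal.tendsto 0).comp hexp
      simpa [Function.comp_def] using this
    have := ENNReal.Tendsto.const_mul hof (Or.inr (hBne x))
    simpa using this
  have hLeq : ∀ t : ℝ, 0 ≤ t →
      (∫⁻ y, (‖θ t y‖₊ : ℝ≥0∞) ^ p ∂μ) = ∫⁻ x, G t x ∂μ := by
    intro t ht
    let e : Torus d ≃ᵐ Torus d :=
      { toFun := ψ t
        invFun := ψ (-t)
        left_inv := fun x => by rw [hψcomp t (-t) x, neg_add_cancel, hψ0]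
        right_inv := fun x => by rw [hψcomp (-t) t x, add_neg_cancel, hψ0]
        measurable_toFun := (hψmp t).measurable
        measurable_invFun := (hψmp (-t)).measurable }
    have hmap : Measure.map (⇑e) μ = μ := (hψmp t).map_eq
    calc (∫⁻ y, (‖θ t y‖₊ : ℝ≥0∞) ^ p ∂μ)
        = ∫⁻ y, (‖θ t y‖₊ : ℝ≥0∞) ^ p ∂(Measure.map (⇑e) μ) := by rw [hmap]
      _ = ∫⁻ x, (‖θ t (ψ t x)‖₊ : ℝ≥0∞) ^ p ∂μ := lintegral_map_equiv _ e
      _ = ∫⁻ x, G t x ∂μ := by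
          apply lintegral_congr_ae
          filter_upwards [hgoodset, hθ₀m_ae] with x hgx hθx
          rw [hθ t x, hρR x hgx.2.1 t ht, nnnorm_mul, ENNReal.coe_mul,
            ENNReal.mul_rpow_of_nonneg _ _ hp0']
          congr 1
          · simp only [hBdef, hθx]
          · rw [show ((‖Real.exp (-ρ t x)‖₊ : ℝ≥0∞)) = ‖Real.exp (-ρ t x)‖ₑ from rfl,
              Real.enorm_eq_ofReal (Real.exp_nonneg _),
              ENNReal.ofReal_rpow_of_nonneg (Real.exp_nonneg _) hp0', ← Real.exp_mul]
            congr 2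
            ring
  have hmain : Tendsto (fun t : ℝ => ∫⁻ y, (‖θ t y‖₊ : ℝ≥0∞) ^ p ∂μ) atTop (𝓝 0) := by
    have hdct := tendsto_lintegral_filter_of_dominated_convergence (μ := μ) (l := atTop)
      (F := G) (f := fun _ => 0) B
      (Filter.Eventually.of_forall hGmeas)
      (Filter.Eventually.of_forall fun t => Filter.Eventually.of_forall fun x => hGbound t x)
      hBfin hGlim
    rw [lintegral_zero] at hdct
    refine hdct.congr' ?_
    filter_upwards [eventually_ge_atTop (0:ℝ)] with t ht
    exact (hLeq t ht).symm
  have hfinal : Tendsto (fun t : ℝ => (∫⁻ y, (‖θ t y‖₊ : ℝ≥0∞) ^ p ∂μ) ^ (1 / p))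
      atTop (𝓝 0) := by
    have hc := (ENNReal.continuous_rpow_const (y := 1 / p)).tendsto 0
    have hcomp := hc.comp hmain
    rwa [ENNReal.zero_rpow_of_pos (by positivity)] at hcomp
  refine hfinal.congr fun t => ?_
  rw [eLpNorm_eq_lintegral_rpow_enorm_toReal hq0 hqtop, hqtoReal]
  rfl

end
end

section
/- Let d ≥ 1, let v : 𝕋^d → ℝ^d be a Lipschitz divergence-free vector field whose flow ψ is uniquely ergodic, and let φ : 𝕋^d → ℝ be a nonnegative continuous function with ⟨φ⟩ > 0. Let p ∈ [1,∞], θ_0 ∈ L^p(𝕋^d), and let θ be the solution of ∂_t θ + v·∇θ = −φ θ with θ(0,·) = θ_0, i.e. θ(t,ψ(t,x)) = θ_0(x) exp(−∫_0^t φ(ψ(τ,x)) dτ). Then for every μ ∈ [0, ⟨φ⟩) there exists T_0 > 0 such that for all t ≥ T_0, ‖θ(t)‖_{L^p} ≤ ‖θ_0‖_{L^p} e^{−μ t}. -/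
open MeasureTheory Filter Topology

noncomputable section

section AuxRMK
open BoundedContinuousFunction NNReal ENNReal Set TopologicalSpace

namespace RMKaux

set_option linter.unusedSectionVars false
variable {X : Type*} [TopologicalSpace X] [CompactSpace X] [T2Space X] [Nonempty X]

/-- bundle a continuous nonneg function -/
def bcnn (f : X → ℝ≥0) (hf : Continuous f) : X →ᵇ ℝ≥0 :=
  BoundedContinuousFunction.mkOfCompact ⟨f, hf⟩

@[simp] lemma bcnn_apply (f : X → ℝ≥0) (hf : Continuous f) (x : X) : bcnn f hf x = f x := rfl

/-- the sup bound of a nonneg bounded continuous function -/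
def bnd (f : X →ᵇ ℝ≥0) : ℝ≥0 := sSup (Set.range f)

lemma le_bnd (f : X →ᵇ ℝ≥0) (x : X) : f x ≤ bnd f :=
  le_csSup (isCompact_range f.continuous).bddAbove ⟨x, rfl⟩

/-- a bounded continuous function on a compact space, as a compactly supported one -/
def ofBC (g : X →ᵇ ℝ≥0) : CompactlySupportedContinuousMap X ℝ≥0 :=
  CompactlySupportedContinuousMap.continuousMapEquiv g.toContinuousMap

@[simp] lemma ofBC_apply (g : X →ᵇ ℝ≥0) (x : X) : ofBC g x = g x := rfl

variable (Λ : (X →ᵇ ℝ≥0) →ₗ[ℝ≥0] ℝ≥0)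

/-- the functional on compactly supported functions -/
def Λc : CompactlySupportedContinuousMap X ℝ≥0 →ₗ[ℝ≥0] ℝ≥0 where
  toFun f := Λ f.toBoundedContinuousFunction
  map_add' f g := by rw [← map_add]; rfl
  map_smul' c f := by rw [RingHom.id_apply, ← Λ.map_smul]; rfl

lemma lam_mono {f g : X →ᵇ ℝ≥0} (h : ∀ x, f x ≤ g x) : Λ f ≤ Λ g := by
  have hc : Continuous fun x => g x - f x := g.continuous.sub f.continuous
  have : f + bcnn (fun x => g x - f x) hc = g := by
    ext x
    simp [add_tsub_cancel_of_le (h x)]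
  calc Λ f ≤ Λ f + Λ (bcnn (fun x => g x - f x) hc) := le_self_add
    _ = Λ g := by rw [← map_add, this]

/-- The Riesz content as a `Content`. -/
def rieszContentCpt : Content X where
  toFun := rieszContentAux (Λc Λ)
  mono' := fun _ _ h => rieszContentAux_mono (Λc Λ) h
  sup_le' := fun _ _ => rieszContentAux_sup_le (Λc Λ) _ _
  sup_disjoint' := by
    intro K₁ K₂ hdisj _ _
    refine le_antisymm (rieszContentAux_sup_le (Λc Λ) _ _) ?_
    refine le_csInf (rieszContentAux_image_nonempty (Λc Λ) _) ?_
    rintro - ⟨f, hf, rfl⟩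
    obtain ⟨h, h0, h1, hicc⟩ := exists_continuous_zero_one_of_isCompact
      K₁.isCompact K₂.isCompact.isClosed hdisj
    have hc1 : Continuous fun x => f x * Real.toNNReal (1 - h x) :=
      f.continuous.mul ((continuous_real_toNNReal.comp (continuous_const.sub h.continuous)))
    have hc2 : Continuous fun x => f x * Real.toNNReal (h x) :=
      f.continuous.mul (continuous_real_toNNReal.comp h.continuous)
    have hsum : bcnn _ hc1 + bcnn _ hc2 = f := by
      ext x
      have hx := hicc x
      simp only [BoundedContinuousFunction.coe_add, Pi.add_apply, bcnn_apply]
      rw [← mul_add]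
      have : Real.toNNReal (1 - h x) + Real.toNNReal (h x) = 1 := by
        rw [← Real.toNNReal_add (by linarith [hx.2]) hx.1, sub_add_cancel, Real.toNNReal_one]
      rw [this, mul_one]
      rfl
    have hK₁ : rieszContentAux (Λc Λ) K₁ ≤ Λ (bcnn _ hc1) := by
      apply csInf_le (OrderBot.bddBelow _)
      refine ⟨ofBC (bcnn _ hc1), fun x hx => ?_, rfl⟩
      have : h x = 0 := h0 hx
      simp [this, hf x (Or.inl hx)]
    have hK₂ : rieszContentAux (Λc Λ) K₂ ≤ Λ (bcnn _ hc2) := by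
      apply csInf_le (OrderBot.bddBelow _)
      refine ⟨ofBC (bcnn _ hc2), fun x hx => ?_, rfl⟩
      have : h x = 1 := h1 hx
      simp [this, hf x (Or.inr hx)]
    calc rieszContentAux (Λc Λ) K₁ + rieszContentAux (Λc Λ) K₂ ≤ Λ (bcnn _ hc1) + Λ (bcnn _ hc2) :=
          add_le_add hK₁ hK₂
      _ = Λc Λ f := by rw [← map_add, hsum]; rfl

end RMKaux

namespace RMKaux

set_option linter.unusedSectionVars false

variable {X : Type*} [TopologicalSpace X] [CompactSpace X] [T2Space X] [Nonempty X]
variable [MeasurableSpace X] [BorelSpace X]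
variable (Λ : (X →ᵇ ℝ≥0) →ₗ[ℝ≥0] ℝ≥0)

/-- The measure associated to a positive normalized functional. -/
def rieszMeasure : Measure X := (rieszContentCpt Λ).measure

lemma measure_le_of_one_le {K : Compacts X} {f₀ : X →ᵇ ℝ≥0}
    (hf₀ : ∀ x ∈ (K : Set X), 1 ≤ f₀ x) :
    rieszMeasure Λ (K : Set X) ≤ (Λ f₀ : ℝ≥0∞) := by
  have key : ∀ δ : ℝ≥0, 0 < δ → δ < 1 →
      rieszMeasure Λ (K : Set X) ≤ (((1 - δ)⁻¹ * Λ f₀ : ℝ≥0) : ℝ≥0∞) := by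
    intro δ hδ0 hδ1
    have hmeas : rieszMeasure Λ (K : Set X) = (rieszContentCpt Λ).outerMeasure K :=
      Content.measure_apply _ K.isCompact.isClosed.measurableSet
    rw [hmeas]
    set U : Set X := {x | (1:ℝ≥0) - δ < f₀ x} with hUdef
    have hUopen : IsOpen U := isOpen_lt continuous_const f₀.continuous
    have hKU : (K : Set X) ⊆ U := fun x hx =>
      lt_of_lt_of_le (tsub_lt_self one_pos hδ0) (hf₀ x hx)
    have h2 : (0:ℝ≥0) < 1 - δ := tsub_pos_of_lt hδ1
    calc (rieszContentCpt Λ).outerMeasure K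
        ≤ (rieszContentCpt Λ).outerMeasure U := (rieszContentCpt Λ).outerMeasure.mono hKU
      _ = (rieszContentCpt Λ).innerContent ⟨U, hUopen⟩ :=
          Content.outerMeasure_opens _ ⟨U, hUopen⟩
      _ ≤ (((1 - δ)⁻¹ * Λ f₀ : ℝ≥0) : ℝ≥0∞) := by
          rw [Content.innerContent]
          refine iSup_le fun K' => iSup_le fun hK' => ?_
          have hmem : ∀ x ∈ (K' : Set X), (1:ℝ≥0) ≤ ((1 - δ)⁻¹ • f₀) x := by
            intro x hx
            have h1 : (1:ℝ≥0) - δ < f₀ x := hK' hx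
            calc (1:ℝ≥0) = (1-δ)⁻¹ * (1-δ) := (inv_mul_cancel₀ h2.ne').symm
              _ ≤ (1-δ)⁻¹ * f₀ x := mul_le_mul_right h1.le _
          have : rieszContentAux (Λc Λ) K' ≤ (1-δ)⁻¹ * Λ f₀ := by
            calc rieszContentAux (Λc Λ) K' ≤ Λ ((1-δ)⁻¹ • f₀) :=
                  csInf_le (OrderBot.bddBelow _) ⟨ofBC ((1-δ)⁻¹ • f₀), hmem, rfl⟩
              _ = (1-δ)⁻¹ * Λ f₀ := Λ.map_smul _ _
          exact ENNReal.coe_le_coe.mpr this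
  have hfin : rieszMeasure Λ (K : Set X) ≠ ⊤ := by
    refine ne_top_of_le_ne_top ?_ (key 2⁻¹ (by positivity) (by rw [← NNReal.coe_lt_coe]; push_cast; norm_num))
    exact ENNReal.coe_ne_top
  lift rieszMeasure Λ (K : Set X) to ℝ≥0 using hfin with q hq
  rw [ENNReal.coe_le_coe]
  -- real-number limit argument
  have hreal : ∀ n : ℕ, (1 - ((n:ℝ)+2)⁻¹) * (q:ℝ) ≤ (Λ f₀ : ℝ) := by
    intro n
    have hδ0 : (0:ℝ≥0) < ((n:ℝ≥0)+2)⁻¹ := by positivity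
    have hδ1 : ((n:ℝ≥0)+2)⁻¹ < 1 := by
      rw [inv_lt_one_iff₀]
      right
      have : (1:ℝ≥0) < 2 := by norm_num
      calc (1:ℝ≥0) < 2 := this
        _ ≤ (n:ℝ≥0) + 2 := le_add_self
    have hk := key _ hδ0 hδ1
    rw [ENNReal.coe_le_coe] at hk
    have h2 : (0:ℝ≥0) < 1 - ((n:ℝ≥0)+2)⁻¹ := tsub_pos_of_lt hδ1
    have hmul : (1 - ((n:ℝ≥0)+2)⁻¹) * q ≤ Λ f₀ := by
      calc (1 - ((n:ℝ≥0)+2)⁻¹) * q ≤ (1 - ((n:ℝ≥0)+2)⁻¹) * ((1 - ((n:ℝ≥0)+2)⁻¹)⁻¹ * Λ f₀) :=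
            mul_le_mul_right hk _
        _ = Λ f₀ := by rw [← mul_assoc, mul_inv_cancel₀ h2.ne', one_mul]
    have := NNReal.coe_le_coe.mpr hmul
    rw [NNReal.coe_mul, NNReal.coe_sub hδ1.le] at this
    simpa using this
  have hT : Filter.Tendsto (fun n : ℕ => (1 - ((n:ℝ)+2)⁻¹) * (q:ℝ)) atTop (𝓝 ((1 - 0) * q)) := by
    refine Filter.Tendsto.mul ?_ tendsto_const_nhds
    refine Filter.Tendsto.sub tendsto_const_nhds ?_
    exact tendsto_inv_atTop_zero.comp (tendsto_atTop_add_const_right _ 2 tendsto_natCast_atTop_atTop)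
  have := le_of_tendsto hT (Filter.Eventually.of_forall hreal)
  rw [sub_zero, one_mul] at this
  exact_mod_cast this

lemma rieszMeasure_univ : rieszMeasure Λ (Set.univ : Set X) = (Λ 1 : ℝ≥0∞) := by
  refine le_antisymm ?_ ?_
  · have := measure_le_of_one_le Λ (K := ⟨Set.univ, isCompact_univ⟩) (f₀ := 1)
      (fun x _ => le_refl _)
    exact this
  · have hmeas : rieszMeasure Λ (Set.univ : Set X) = (rieszContentCpt Λ).outerMeasure Set.univ :=
      Content.measure_apply _ MeasurableSet.univ
    rw [hmeas, ← Opens.coe_top, Content.outerMeasure_opens]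
    refine le_trans ?_ ((rieszContentCpt Λ).le_innerContent ⟨Set.univ, isCompact_univ⟩ ⊤
      (by simp))
    show (Λ 1 : ℝ≥0∞) ≤ ((rieszContentAux (Λc Λ) ⟨Set.univ, isCompact_univ⟩ : ℝ≥0) : ℝ≥0∞)
    rw [ENNReal.coe_le_coe]
    refine le_csInf (rieszContentAux_image_nonempty (Λc Λ) _) ?_
    rintro - ⟨f, hf, rfl⟩
    exact lam_mono Λ (g := f.toBoundedContinuousFunction) (fun x => by simpa using hf x trivial)

end RMKaux

namespace RMKaux

set_option linter.unusedSectionVars false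

variable {X : Type*} [TopologicalSpace X] [CompactSpace X] [T2Space X] [Nonempty X]
variable [MeasurableSpace X] [BorelSpace X]
variable (Λ : (X →ᵇ ℝ≥0) →ₗ[ℝ≥0] ℝ≥0)

lemma sum_min_tsub (u y : ℝ≥0) : ∀ n : ℕ,
    ∑ i ∈ Finset.range n, min u (y - (i:ℝ≥0) * u) = min ((n:ℝ≥0) * u) y := by
  intro n
  induction n with
  | zero => simp
  | succ m ih =>
    rw [Finset.sum_range_succ, ih]
    rcases le_total y ((m:ℝ≥0) * u) with h | h
    · have h1 : y - (m:ℝ≥0) * u = 0 := tsub_eq_zero_of_le h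
      have h2 : y ≤ ((m:ℝ≥0)+1) * u := le_trans h (mul_le_mul_left le_self_add u : (m:ℝ≥0)*u ≤ ((m:ℝ≥0)+1)*u)
      rw [h1, min_eq_right h, min_zero, add_zero, min_eq_right (by push_cast; exact_mod_cast h2)]
    · rw [min_eq_left h]
      have : (m:ℝ≥0) * u + min u (y - (m:ℝ≥0) * u) = min ((m:ℝ≥0)*u + u) ((m:ℝ≥0)*u + (y - (m:ℝ≥0)*u)) := by
        rw [min_add_add_left]
      rw [this, add_tsub_cancel_of_le h]
      congr 1
      push_cast
      ring

lemma lintegral_rieszMeasure_le (f : X →ᵇ ℝ≥0) :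
    ∫⁻ x, (f x : ℝ≥0∞) ∂(rieszMeasure Λ) ≤ (Λ f : ℝ≥0∞) := by
  set c := bnd f with hc
  rcases eq_or_lt_of_le (zero_le : (0:ℝ≥0) ≤ c) with hc0 | hc0
  · have hf0 : ∀ x, f x = 0 := fun x => le_antisymm (hc0 ▸ le_bnd f x) zero_le
    simp [hf0]
  -- main estimate for each n ≥ 1
  have main : ∀ n : ℕ, 0 < n →
      ∫⁻ x, (f x : ℝ≥0∞) ∂(rieszMeasure Λ) ≤ ((c / n * Λ 1 : ℝ≥0) : ℝ≥0∞) + Λ f := by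
    intro n hn
    set u : ℝ≥0 := c / n with hu
    have hu0 : 0 < u := by
      apply div_pos hc0
      exact_mod_cast hn
    have hnu : (n : ℝ≥0) * u = c := by
      rw [hu, mul_div_cancel₀]
      exact_mod_cast hn.ne'
    -- the compact level sets
    have hKcl : ∀ i : ℕ, IsClosed {x : X | (i:ℝ≥0) * u ≤ f x} := fun i =>
      isClosed_le continuous_const f.continuous
    set K : ℕ → Compacts X := fun i => ⟨{x : X | (i:ℝ≥0) * u ≤ f x}, (hKcl i).isCompact⟩ with hK
    -- the staircase functions
    have hgc : ∀ i : ℕ, Continuous fun x : X => min u (f x - (i:ℝ≥0) * u) := fun i =>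
      continuous_const.min (f.continuous.sub continuous_const)
    set g : ℕ → (X →ᵇ ℝ≥0) := fun i => bcnn _ (hgc i) with hg
    -- sum of g's equals f
    have hsum : ∀ x : X, ∑ i ∈ Finset.range n, g i x = f x := by
      intro x
      show ∑ i ∈ Finset.range n, min u (f x - (i:ℝ≥0) * u) = f x
      rw [sum_min_tsub, hnu, min_eq_right (le_bnd f x)]
    -- g i is u on K (i+1)
    have hg_on : ∀ i : ℕ, ∀ x ∈ (K (i+1) : Set X), (1:ℝ≥0) ≤ (u⁻¹ • g i) x := by
      intro i x hx
      have hx' : ((i:ℝ≥0)+1) * u ≤ f x := by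
        have := hx
        simp only [hK, Compacts.coe_mk, Set.mem_setOf_eq] at this
        push_cast at this ⊢
        exact this
      have : u ≤ f x - (i:ℝ≥0) * u := by
        rw [le_tsub_iff_left]
        · calc (i:ℝ≥0) * u + u = ((i:ℝ≥0)+1) * u := by ring
            _ ≤ f x := hx'
        · calc (i:ℝ≥0) * u ≤ ((i:ℝ≥0)+1) * u := mul_le_mul_left le_self_add u
            _ ≤ f x := hx'
      show (1:ℝ≥0) ≤ u⁻¹ * min u (f x - (i:ℝ≥0) * u)
      rw [min_eq_left this, inv_mul_cancel₀ hu0.ne']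
    -- measure bound on K (i+1)
    have hQK : ∀ i : ℕ, (u : ℝ≥0∞) * rieszMeasure Λ (K (i+1) : Set X) ≤ ((Λ (g i) : ℝ≥0) : ℝ≥0∞) := by
      intro i
      calc (u : ℝ≥0∞) * rieszMeasure Λ (K (i+1) : Set X)
          ≤ (u : ℝ≥0∞) * ((Λ (u⁻¹ • g i) : ℝ≥0) : ℝ≥0∞) :=
            mul_le_mul_right (measure_le_of_one_le Λ (hg_on i)) _
        _ = ((u * Λ (u⁻¹ • g i) : ℝ≥0) : ℝ≥0∞) := by rw [ENNReal.coe_mul]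
        _ = ((Λ (g i) : ℝ≥0) : ℝ≥0∞) := by
            rw [Λ.map_smul]
            congr 1
            show u * (u⁻¹ * Λ (g i)) = Λ (g i)
            rw [← mul_assoc, mul_inv_cancel₀ hu0.ne', one_mul]
    -- pointwise bound by indicators
    have hpt : ∀ x : X, (f x : ℝ≥0∞) ≤
        ∑ i ∈ Finset.range n, (K i : Set X).indicator (fun _ => (u : ℝ≥0∞)) x := by
      intro x
      rw [← hsum x]
      push_cast
      refine Finset.sum_le_sum fun i _ => ?_
      by_cases hxi : x ∈ (K i : Set X)
      · rw [Set.indicator_of_mem hxi]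
        exact_mod_cast ENNReal.coe_le_coe.mpr (min_le_left _ _)
      · have : ¬ ((i:ℝ≥0) * u ≤ f x) := hxi
        rw [Set.indicator_of_notMem hxi]
        have h0 : f x - (i:ℝ≥0) * u = 0 := tsub_eq_zero_of_le (le_of_not_ge this)
        show ((g i x : ℝ≥0) : ℝ≥0∞) ≤ 0
        show ((min u (f x - (i:ℝ≥0) * u) : ℝ≥0) : ℝ≥0∞) ≤ 0
        rw [h0, min_zero]
        simp
    -- integrate
    have hint : ∫⁻ x, (f x : ℝ≥0∞) ∂(rieszMeasure Λ) ≤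
        ∑ i ∈ Finset.range n, (u : ℝ≥0∞) * rieszMeasure Λ (K i : Set X) := by
      calc ∫⁻ x, (f x : ℝ≥0∞) ∂(rieszMeasure Λ)
          ≤ ∫⁻ x, ∑ i ∈ Finset.range n, (K i : Set X).indicator (fun _ => (u : ℝ≥0∞)) x
            ∂(rieszMeasure Λ) := lintegral_mono hpt
        _ = ∑ i ∈ Finset.range n, ∫⁻ x, (K i : Set X).indicator (fun _ => (u : ℝ≥0∞)) x
            ∂(rieszMeasure Λ) := by
            apply lintegral_finset_sum
            intro i _
            exact measurable_const.indicator (hKcl i).measurableSet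
        _ = ∑ i ∈ Finset.range n, (u : ℝ≥0∞) * rieszMeasure Λ (K i : Set X) := by
            refine Finset.sum_congr rfl fun i _ => ?_
            rw [show (K i : Set X) = {x : X | (i:ℝ≥0) * u ≤ f x} from rfl,
              lintegral_indicator (hKcl i).measurableSet]
            simp [mul_comm]
    obtain ⟨m, hm⟩ : ∃ m, n = m + 1 := ⟨n - 1, (Nat.succ_pred_eq_of_pos hn).symm⟩
    subst hm
    rw [Finset.sum_range_succ'] at hint
    have hK0 : (u : ℝ≥0∞) * rieszMeasure Λ (K 0 : Set X) ≤ ((u * Λ 1 : ℝ≥0) : ℝ≥0∞) := by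
      rw [ENNReal.coe_mul]
      refine mul_le_mul_right ?_ _
      calc rieszMeasure Λ (K 0 : Set X) ≤ rieszMeasure Λ (Set.univ : Set X) :=
            measure_mono (Set.subset_univ _)
        _ = (Λ 1 : ℝ≥0∞) := rieszMeasure_univ Λ
    calc ∫⁻ x, (f x : ℝ≥0∞) ∂(rieszMeasure Λ)
        ≤ (∑ i ∈ Finset.range m, (u : ℝ≥0∞) * rieszMeasure Λ (K (i+1) : Set X)) +
          (u : ℝ≥0∞) * rieszMeasure Λ (K 0 : Set X) := hint
      _ ≤ (∑ i ∈ Finset.range (m+1), ((Λ (g i) : ℝ≥0) : ℝ≥0∞)) + ((u * Λ 1 : ℝ≥0) : ℝ≥0∞) := by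
          refine add_le_add ?_ hK0
          refine le_trans (Finset.sum_le_sum fun i _ => hQK i) ?_
          exact Finset.sum_le_sum_of_subset (Finset.range_subset_range.mpr (Nat.le_succ m))
      _ = ((Λ f : ℝ≥0) : ℝ≥0∞) + ((u * Λ 1 : ℝ≥0) : ℝ≥0∞) := by
          congr 1
          rw [← ENNReal.coe_finset_sum]
          congr 1
          rw [← map_sum]
          congr 1
          ext x
          rw [BoundedContinuousFunction.sum_apply]
          exact congrArg _ (hsum x)
      _ = ((u * Λ 1 : ℝ≥0) : ℝ≥0∞) + Λ f := by rw [add_comm]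
  -- conclude
  refine ENNReal.le_of_forall_pos_le_add fun ε hε _ => ?_
  obtain ⟨n, hn⟩ := exists_nat_gt ((c * Λ 1) / ε : ℝ≥0)
  have hn1 : 0 < n + 1 := Nat.succ_pos n
  refine le_trans (main (n+1) hn1) ?_
  rw [add_comm]
  refine add_le_add_right ?_ _
  rw [ENNReal.coe_le_coe]
  have hlt : (c * Λ 1 : ℝ≥0) < ((n:ℝ≥0)+1) * ε := by
    rw [div_lt_iff₀ hε] at hn
    calc (c * Λ 1 : ℝ≥0) < (n:ℝ≥0) * ε := by exact_mod_cast hn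
      _ ≤ ((n:ℝ≥0)+1) * ε := mul_le_mul_left le_self_add ε
  calc c / ((n:ℕ)+1 : ℕ) * Λ 1 = (c * Λ 1) / ((n:ℝ≥0)+1) := by
        push_cast
        rw [div_mul_eq_mul_div]
      _ ≤ (((n:ℝ≥0)+1) * ε) / ((n:ℝ≥0)+1) := by
          rw [div_eq_mul_inv, div_eq_mul_inv]
          exact mul_le_mul_left hlt.le _
      _ = ε := by
          have hne : ((n:ℝ≥0)+1) ≠ 0 := by positivity
          field_simp

end RMKaux

namespace RMKaux

set_option linter.unusedSectionVars false

variable {X : Type*} [TopologicalSpace X] [CompactSpace X] [T2Space X] [Nonempty X]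
variable [MeasurableSpace X] [BorelSpace X]
variable (Λ : (X →ᵇ ℝ≥0) →ₗ[ℝ≥0] ℝ≥0)

theorem lintegral_rieszMeasure (f : X →ᵇ ℝ≥0) :
    ∫⁻ x, (f x : ℝ≥0∞) ∂(rieszMeasure Λ) = (Λ f : ℝ≥0∞) := by
  refine le_antisymm (lintegral_rieszMeasure_le Λ f) ?_
  set c := bnd f with hc
  have hsubc : Continuous fun x : X => c - f x := continuous_const.sub f.continuous
  set h : X →ᵇ ℝ≥0 := bcnn _ hsubc with hh
  have hfh : ∀ x, f x + h x = c := fun x => add_tsub_cancel_of_le (le_bnd f x)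
  have hmeasf : Measurable fun x : X => (f x : ℝ≥0∞) :=
    (ENNReal.continuous_coe.comp f.continuous).measurable
  have hQ : (∫⁻ x, (f x : ℝ≥0∞) ∂(rieszMeasure Λ)) + (∫⁻ x, (h x : ℝ≥0∞) ∂(rieszMeasure Λ))
      = (c : ℝ≥0∞) * rieszMeasure Λ (Set.univ : Set X) := by
    rw [← lintegral_add_left hmeasf]
    calc ∫⁻ x, ((f x : ℝ≥0∞) + (h x : ℝ≥0∞)) ∂(rieszMeasure Λ)
        = ∫⁻ _, (c : ℝ≥0∞) ∂(rieszMeasure Λ) := by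
          congr 1
          funext x
          rw [← ENNReal.coe_add, hfh x]
      _ = (c : ℝ≥0∞) * rieszMeasure Λ (Set.univ : Set X) := lintegral_const _
  have hΛsum : Λ f + Λ h = c * Λ 1 := by
    have hfh' : f + h = c • (1 : X →ᵇ ℝ≥0) := by
      ext x
      show ((f x + h x : ℝ≥0) : ℝ) = ((c • (1:X →ᵇ ℝ≥0)) x : ℝ)
      rw [hfh x]
      norm_num
    rw [← map_add, hfh', Λ.map_smul, smul_eq_mul]
  rw [rieszMeasure_univ Λ] at hQ
  have hfin : ((Λ h : ℝ≥0) : ℝ≥0∞) ≠ ⊤ := ENNReal.coe_ne_top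
  have key : ((Λ f : ℝ≥0) : ℝ≥0∞) + ((Λ h : ℝ≥0) : ℝ≥0∞)
      ≤ (∫⁻ x, (f x : ℝ≥0∞) ∂(rieszMeasure Λ)) + ((Λ h : ℝ≥0) : ℝ≥0∞) := by
    calc ((Λ f : ℝ≥0) : ℝ≥0∞) + ((Λ h : ℝ≥0) : ℝ≥0∞) = ((c * Λ 1 : ℝ≥0) : ℝ≥0∞) := by
          rw [← ENNReal.coe_add, hΛsum]
      _ = (c : ℝ≥0∞) * (Λ 1 : ℝ≥0∞) := ENNReal.coe_mul _ _
      _ = (∫⁻ x, (f x : ℝ≥0∞) ∂(rieszMeasure Λ)) + (∫⁻ x, (h x : ℝ≥0∞) ∂(rieszMeasure Λ)) :=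
          hQ.symm
      _ ≤ (∫⁻ x, (f x : ℝ≥0∞) ∂(rieszMeasure Λ)) + ((Λ h : ℝ≥0) : ℝ≥0∞) :=
          add_le_add_right (lintegral_rieszMeasure_le Λ h) _
  exact (ENNReal.add_le_add_iff_right hfin).mp key

theorem isProbability_rieszMeasure (hΛ1 : Λ 1 = 1) :
    IsProbabilityMeasure (rieszMeasure Λ) := by
  constructor
  rw [rieszMeasure_univ Λ, hΛ1]
  rfl

end RMKaux

end AuxRMK

section AuxFlow
namespace FlowAux

lemma intCoe_zero (m : ℤ) : ((m : ℝ) : AddCircle (1:ℝ)) = 0 := by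
  have h : ((m:ℝ)) = m • (1:ℝ) := by simp
  rw [h, AddCircle.coe_zsmul, AddCircle.coe_period, smul_zero]

lemma projDist_le (a b : ℝ) : dist ((a : AddCircle (1:ℝ))) (b : AddCircle (1:ℝ)) ≤ dist a b := by
  rw [dist_eq_norm, dist_eq_norm, ← AddCircle.coe_sub]
  exact QuotientAddGroup.norm_mk_le_norm

lemma proj_continuous (d : ℕ) : Continuous (Torus.proj d) := by
  refine continuous_pi fun i => ?_
  exact (AddCircle.continuous_mk' 1).comp (continuous_apply i)

variable {d : ℕ} {v : Torus d → Fin d → ℝ} {ψ : ℝ → Torus d → Torus d}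

lemma orbit_continuous (hflow : IsFlowOf d v ψ) (x : Torus d) :
    Continuous fun t => ψ t x := by
  obtain ⟨Y, hY1, hY2⟩ := hflow.2.2 x
  have hYc : Continuous Y := by
    rw [continuous_iff_continuousAt]
    exact fun t => (hY2 t).continuousAt
  have : (fun t => ψ t x) = fun t => Torus.proj d (Y t) := by
    funext t
    rw [hY1 t]
  rw [this]
  exact (proj_continuous d).comp hYc

lemma flow_dist_le (hflow : IsFlowOf d v ψ) {K : NNReal} (hv : LipschitzWith K v)
    {s : ℝ} (hs : 0 ≤ s) (x y : Torus d) :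
    dist (ψ s x) (ψ s y) ≤ dist x y * Real.exp (K * s) := by
  obtain ⟨Xc, hX1, hX2⟩ := hflow.2.2 x
  obtain ⟨Yc, hY1, hY2⟩ := hflow.2.2 y
  set k : Fin d → ℝ := fun i => ((round (Xc 0 i - Yc 0 i) : ℤ) : ℝ) with hk
  set Y' : ℝ → Fin d → ℝ := fun t => Yc t + k with hY'
  have hY'1 : ∀ t, Torus.proj d (Y' t) = ψ t y := by
    intro t
    rw [← hY1 t]
    funext i
    show ((Yc t i + k i : ℝ) : AddCircle (1:ℝ)) = (Yc t i : AddCircle (1:ℝ))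
    rw [AddCircle.coe_add, hk, intCoe_zero, add_zero]
  have hg : ∀ t, HasDerivAt (fun t => Xc t - Y' t) (v (ψ t x) - v (ψ t y)) t := by
    intro t
    exact (hX2 t).sub ((hY2 t).add_const k)
  have hdistle : ∀ t, dist (ψ t x) (ψ t y) ≤ ‖Xc t - Y' t‖ := by
    intro t
    rw [← hX1 t, ← hY'1 t]
    refine (dist_pi_le_iff (norm_nonneg _)).mpr fun i => ?_
    calc dist ((Xc t i : AddCircle (1:ℝ))) (Y' t i : AddCircle (1:ℝ)) ≤ dist (Xc t i) (Y' t i) :=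
          projDist_le _ _
      _ ≤ ‖Xc t - Y' t‖ := by
          rw [dist_eq_norm]
          exact norm_le_pi_norm (Xc t - Y' t) i
  have h0 : ‖Xc 0 - Y' 0‖ ≤ dist x y := by
    have hxx : ∀ i, (x i) = ((Xc 0 i : ℝ) : AddCircle (1:ℝ)) := by
      intro i
      have := hX1 0
      rw [hflow.1 x] at this
      exact (congrFun this i).symm
    have hyy : ∀ i, (y i) = ((Yc 0 i : ℝ) : AddCircle (1:ℝ)) := by
      intro i
      have := hY1 0
      rw [hflow.1 y] at this
      exact (congrFun this i).symm
    refine (pi_norm_le_iff_of_nonneg dist_nonneg).mpr fun i => ?_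
    have key : ‖(Xc 0 - Y' 0) i‖ = dist (x i) (y i) := by
      rw [hxx i, hyy i, dist_eq_norm, ← AddCircle.coe_sub, AddCircle.norm_eq]
      show |(Xc 0 i - (Yc 0 i + k i))| = _
      rw [hk]
      simp only [inv_one, one_mul, mul_one]
      congr 1
      ring
    rw [key]
    exact dist_le_pi_dist x y i
  -- Gronwall
  have hcont : ContinuousOn (fun t => Xc t - Y' t) (Set.Icc 0 s) :=
    (Continuous.continuousOn (by
      rw [continuous_iff_continuousAt]
      exact fun t => (hg t).continuousAt))
  have hderiv : ∀ t ∈ Set.Ico 0 s, HasDerivWithinAt (fun t => Xc t - Y' t)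
      (v (ψ t x) - v (ψ t y)) (Set.Ici t) t := fun t _ => (hg t).hasDerivWithinAt
  have hbound : ∀ t ∈ Set.Ico 0 s, ‖v (ψ t x) - v (ψ t y)‖ ≤ (K:ℝ) * ‖Xc t - Y' t‖ + 0 := by
    intro t _
    rw [add_zero]
    have h1 : dist (v (ψ t x)) (v (ψ t y)) ≤ (K:ℝ) * dist (ψ t x) (ψ t y) := hv.dist_le_mul _ _
    rw [dist_eq_norm] at h1
    refine h1.trans ?_
    exact mul_le_mul_of_nonneg_left (hdistle t) K.2
  have := norm_le_gronwallBound_of_norm_deriv_right_le hcont hderiv h0 hbound s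
    (Set.mem_Icc.mpr ⟨hs, le_refl s⟩)
  rw [gronwallBound_ε0, sub_zero] at this
  exact (hdistle s).trans this

lemma flow_continuous (hflow : IsFlowOf d v ψ) {K : NNReal} (hv : LipschitzWith K v)
    {s : ℝ} (hs : 0 ≤ s) : Continuous (ψ s) := by
  have : LipschitzWith (Real.toNNReal (Real.exp (K * s))) (ψ s) := by
    refine LipschitzWith.of_dist_le_mul fun x y => ?_
    rw [Real.coe_toNNReal _ (Real.exp_nonneg _)]
    rw [mul_comm]
    exact flow_dist_le hflow hv hs x y
  exact this.continuous

end FlowAux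

end AuxFlow

section KeyAvg

open BoundedContinuousFunction NNReal ENNReal Set TopologicalSpace

instance torusProb (d : ℕ) : IsProbabilityMeasure (volume : Measure (Torus d)) := by
  constructor
  have h : (volume : Measure (Torus d)) = Measure.pi fun _ => volume := rfl
  rw [h, Measure.pi_univ]
  simp [AddCircle.measure_univ]

theorem uniform_average_bound
    (d : ℕ)
    (v : Torus d → Fin d → ℝ) (K : NNReal) (hv : LipschitzWith K v)
    (ψ : ℝ → Torus d → Torus d) (hflow : IsFlowOf d v ψ)
    (hψmp : ∀ t : ℝ, MeasurePreserving (ψ t) volume volume)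
    (huniq : ∀ μ : Measure (Torus d), IsProbabilityMeasure μ →
      (∀ t : ℝ, ∀ A : Set (Torus d), MeasurableSet A → μ (ψ t ⁻¹' A) = μ A) →
      μ = (volume : Measure (Torus d)))
    (φ : Torus d → ℝ) (hφ0 : ∀ x, 0 ≤ φ x) (hφcont : Continuous φ)
    (μ : ℝ) (hμ0 : 0 ≤ μ) (hμ : μ < ∫ x, φ x ∂(volume : Measure (Torus d))) :
    ∃ T₀ : ℝ, 0 < T₀ ∧ ∀ t : ℝ, T₀ ≤ t → ∀ x : Torus d,
      μ * t ≤ ∫ τ in (0:ℝ)..t, φ (ψ τ x) := by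
  classical
  by_contra hcon
  push_neg at hcon
  have H : ∀ n : ℕ, ∃ T : ℝ, ((n:ℝ)+1 ≤ T) ∧ ∃ x : Torus d,
      (∫ τ in (0:ℝ)..T, φ (ψ τ x)) < μ * T := by
    intro n
    obtain ⟨t, ht1, x, hx⟩ := hcon ((n:ℝ)+1) (by positivity)
    exact ⟨t, ht1, x, hx⟩
  choose T hT xx hxx using H
  have hTpos : ∀ n, 0 < T n := fun n => lt_of_lt_of_le (by positivity) (hT n)
  have horb : ∀ n, Continuous fun τ => ψ τ (xx n) := fun n => FlowAux.orbit_continuous hflow _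
  -- the empirical measures
  set P : ℕ → Measure (Torus d) := fun n =>
    (ENNReal.ofReal (T n))⁻¹ •
      Measure.map (fun τ => ψ τ (xx n)) (volume.restrict (Set.Ioc 0 (T n))) with hP
  have hPuniv : ∀ n, P n Set.univ = 1 := by
    intro n
    rw [hP]
    simp only [Measure.smul_apply, smul_eq_mul]
    rw [Measure.map_apply (horb n).measurable MeasurableSet.univ, Set.preimage_univ,
      Measure.restrict_apply_univ, Real.volume_Ioc, sub_zero]
    exact ENNReal.inv_mul_cancel (by simp [hTpos n]) ENNReal.ofReal_ne_top
  have hPprob : ∀ n, IsProbabilityMeasure (P n) := fun n => ⟨hPuniv n⟩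
  -- lintegral formula
  have hPlint : ∀ n (f : Torus d →ᵇ ℝ≥0),
      ∫⁻ a, (f a : ℝ≥0∞) ∂(P n) =
        ENNReal.ofReal ((T n)⁻¹ * ∫ τ in (0:ℝ)..(T n), ((f (ψ τ (xx n)) : ℝ))) := by
    intro n f
    have hmf : Measurable fun a : Torus d => (f a : ℝ≥0∞) :=
      (ENNReal.continuous_coe.comp f.continuous).measurable
    have hcont : Continuous fun τ : ℝ => ((f (ψ τ (xx n)) : ℝ)) :=
      NNReal.continuous_coe.comp (f.continuous.comp (horb n))
    have hInt : IntegrableOn (fun τ : ℝ => ((f (ψ τ (xx n)) : ℝ))) (Set.Ioc 0 (T n)) volume :=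
      hcont.integrableOn_Ioc
    have hstep : ∫⁻ τ in Set.Ioc 0 (T n), ((f (ψ τ (xx n)) : ℝ≥0∞)) =
        ENNReal.ofReal (∫ τ in Set.Ioc 0 (T n), ((f (ψ τ (xx n)) : ℝ))) := by
      rw [show (fun τ : ℝ => ((f (ψ τ (xx n)) : ℝ≥0) : ℝ≥0∞))
          = fun τ : ℝ => ENNReal.ofReal ((f (ψ τ (xx n)) : ℝ)) from
        funext fun τ => (ENNReal.ofReal_coe_nnreal).symm]
      exact (MeasureTheory.ofReal_integral_eq_lintegral_ofReal hInt
        (Filter.Eventually.of_forall fun τ => (f (ψ τ (xx n))).2)).symm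
    rw [hP]
    simp only [lintegral_smul_measure, smul_eq_mul]
    rw [lintegral_map hmf (horb n).measurable, hstep,
      ← intervalIntegral.integral_of_le (hTpos n).le,
      ← ENNReal.ofReal_inv_of_pos (hTpos n),
      ← ENNReal.ofReal_mul (inv_nonneg.mpr (hTpos n).le)]
  have havg_nonneg : ∀ n (f : Torus d →ᵇ ℝ≥0),
      0 ≤ (T n)⁻¹ * ∫ τ in (0:ℝ)..(T n), ((f (ψ τ (xx n)) : ℝ)) := by
    intro n f
    apply mul_nonneg (inv_nonneg.mpr (hTpos n).le)
    apply intervalIntegral.integral_nonneg (hTpos n).le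
    intro τ _
    exact (f (ψ τ (xx n))).2
  -- the sequence of functionals
  set z : ℕ → ((Torus d →ᵇ ℝ≥0) → ℝ≥0) := fun n f => (∫⁻ a, (f a : ℝ≥0∞) ∂(P n)).toNNReal
    with hz
  have hzfin : ∀ n (f : Torus d →ᵇ ℝ≥0), ∫⁻ a, (f a : ℝ≥0∞) ∂(P n) ≠ ⊤ := by
    intro n f
    rw [hPlint n f]
    exact ENNReal.ofReal_ne_top
  have hzcoe : ∀ n (f : Torus d →ᵇ ℝ≥0),
      (z n f : ℝ) = (T n)⁻¹ * ∫ τ in (0:ℝ)..(T n), ((f (ψ τ (xx n)) : ℝ)) := by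
    intro n f
    rw [hz]
    simp only
    rw [hPlint n f, ENNReal.ofReal, ENNReal.toNNReal_coe]
    exact Real.coe_toNNReal _ (havg_nonneg n f)
  have hzle : ∀ n (f : Torus d →ᵇ ℝ≥0), z n f ≤ RMKaux.bnd f := by
    intro n f
    have h1 : ∫⁻ a, (f a : ℝ≥0∞) ∂(P n) ≤ ((RMKaux.bnd f : ℝ≥0) : ℝ≥0∞) := by
      haveI := hPprob n
      calc ∫⁻ a, (f a : ℝ≥0∞) ∂(P n) ≤ ∫⁻ _, ((RMKaux.bnd f : ℝ≥0) : ℝ≥0∞) ∂(P n) :=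
            lintegral_mono fun a => ENNReal.coe_le_coe.mpr (RMKaux.le_bnd f a)
        _ = ((RMKaux.bnd f : ℝ≥0) : ℝ≥0∞) := by rw [lintegral_const, measure_univ, mul_one]
    simpa using ENNReal.toNNReal_mono ENNReal.coe_ne_top h1
  -- cluster point
  have hzC : ∀ n, z n ∈ Set.pi Set.univ
      (fun f : Torus d →ᵇ ℝ≥0 => Set.Icc 0 (RMKaux.bnd f)) :=
    fun n f _ => ⟨zero_le, hzle n f⟩
  have hcomp : IsCompact (Set.pi Set.univ
      (fun f : Torus d →ᵇ ℝ≥0 => Set.Icc 0 (RMKaux.bnd f))) :=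
    isCompact_univ_pi fun _ => isCompact_Icc
  obtain ⟨w, hwC, hw⟩ := hcomp.exists_clusterPt (f := Filter.map z Filter.atTop)
    (Filter.le_principal_iff.mpr (Filter.mem_map.mpr (Filter.Eventually.of_forall hzC)))
  have transfer : ∀ A : Set ((Torus d →ᵇ ℝ≥0) → ℝ≥0), IsClosed A →
      (∀ᶠ n in Filter.atTop, z n ∈ A) → w ∈ A := by
    intro A hA hev
    have h1 : ClusterPt w (Filter.principal A) :=
      hw.mono (Filter.le_principal_iff.mpr (Filter.mem_map.mpr hev))
    rw [← hA.closure_eq]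
    exact mem_closure_iff_clusterPt.mpr h1
  -- additivity
  have hwadd : ∀ f g : Torus d →ᵇ ℝ≥0, w (f + g) = w f + w g := by
    intro f g
    refine transfer {w' | w' (f+g) = w' f + w' g}
      (isClosed_eq (continuous_apply _) ((continuous_apply f).add (continuous_apply g)))
      (Filter.Eventually.of_forall fun n => ?_)
    show (∫⁻ a, ((f+g) a : ℝ≥0∞) ∂(P n)).toNNReal = z n f + z n g
    have hmf : Measurable fun a : Torus d => (f a : ℝ≥0∞) :=
      (ENNReal.continuous_coe.comp f.continuous).measurable
    have hint : ∫⁻ a, ((f+g) a : ℝ≥0∞) ∂(P n)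
        = (∫⁻ a, (f a : ℝ≥0∞) ∂(P n)) + ∫⁻ a, (g a : ℝ≥0∞) ∂(P n) := by
      rw [← lintegral_add_left hmf]
      exact lintegral_congr fun a => rfl
    rw [hint, ENNReal.toNNReal_add (hzfin n f) (hzfin n g)]
  -- scalar multiplication
  have hwsmul : ∀ (c : ℝ≥0) (f : Torus d →ᵇ ℝ≥0), w (c • f) = c * w f := by
    intro c f
    refine transfer {w' | w' (c • f) = c * w' f}
      (isClosed_eq (continuous_apply _) (continuous_const.mul (continuous_apply f)))
      (Filter.Eventually.of_forall fun n => ?_)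
    show (∫⁻ a, ((c • f) a : ℝ≥0∞) ∂(P n)).toNNReal = c * z n f
    have hmf : Measurable fun a : Torus d => (f a : ℝ≥0∞) :=
      (ENNReal.continuous_coe.comp f.continuous).measurable
    have hint : ∫⁻ a, ((c • f) a : ℝ≥0∞) ∂(P n)
        = (c : ℝ≥0∞) * ∫⁻ a, (f a : ℝ≥0∞) ∂(P n) := by
      rw [← lintegral_const_mul _ hmf]
      exact lintegral_congr fun a => rfl
    rw [hint]
    simp [ENNReal.toNNReal_mul, hz]
  -- normalization
  have hwone : w 1 = 1 := by
    refine transfer {w' | w' 1 = 1}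
      (isClosed_eq (continuous_apply _) continuous_const)
      (Filter.Eventually.of_forall fun n => ?_)
    show (∫⁻ a, ((1 : Torus d →ᵇ ℝ≥0) a : ℝ≥0∞) ∂(P n)).toNNReal = 1
    haveI := hPprob n
    simp [BoundedContinuousFunction.coe_one]
  -- bound on φ
  have hφbc : Continuous fun x : Torus d => Real.toNNReal (φ x) :=
    continuous_real_toNNReal.comp hφcont
  set φb : Torus d →ᵇ ℝ≥0 := RMKaux.bcnn _ hφbc with hφb
  have hφbR : ∀ y : Torus d, ((φb y : ℝ≥0) : ℝ) = φ y := fun y =>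
    Real.coe_toNNReal _ (hφ0 y)
  have hwφ : w φb ≤ Real.toNNReal μ := by
    refine transfer {w' | w' φb ≤ Real.toNNReal μ}
      (isClosed_le (continuous_apply _) continuous_const)
      (Filter.Eventually.of_forall fun n => ?_)
    show z n φb ≤ Real.toNNReal μ
    rw [← NNReal.coe_le_coe, hzcoe n φb, Real.coe_toNNReal _ hμ0]
    have hcongr : (∫ τ in (0:ℝ)..(T n), ((φb (ψ τ (xx n)) : ℝ)))
        = ∫ τ in (0:ℝ)..(T n), φ (ψ τ (xx n)) := by
      apply intervalIntegral.integral_congr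
      intro τ _
      exact hφbR _
    rw [hcongr]
    calc (T n)⁻¹ * ∫ τ in (0:ℝ)..(T n), φ (ψ τ (xx n))
        ≤ (T n)⁻¹ * (μ * T n) :=
          mul_le_mul_of_nonneg_left (hxx n).le (inv_nonneg.mpr (hTpos n).le)
      _ = μ := by rw [mul_comm μ (T n), ← mul_assoc, inv_mul_cancel₀ (hTpos n).ne', one_mul]
  -- invariance under the flow
  have hshift : ∀ (s : ℝ) (hs : 0 ≤ s) (f : Torus d →ᵇ ℝ≥0),
      w (f.compContinuous ⟨ψ s, FlowAux.flow_continuous hflow hv hs⟩) = w f := by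
    intro s hs f
    set g := f.compContinuous ⟨ψ s, FlowAux.flow_continuous hflow hv hs⟩ with hgdef
    have hgF : ∀ y : Torus d, g y = f (ψ s y) := fun y => rfl
    -- the real-valued difference estimate
    have hdiff : ∀ n, |(z n g : ℝ) - z n f| ≤ 2 * (RMKaux.bnd f : ℝ) * s / ((n:ℝ)+1) := by
      intro n
      set F : ℝ → ℝ := fun σ => ((f (ψ σ (xx n)) : ℝ)) with hF
      have hFcont : Continuous F := NNReal.continuous_coe.comp (f.continuous.comp (horb n))
      have hFii : ∀ a b : ℝ, IntervalIntegrable F volume a b := fun a b =>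
        hFcont.intervalIntegrable a b
      have hFbd : ∀ σ : ℝ, |F σ| ≤ (RMKaux.bnd f : ℝ) := by
        intro σ
        show |((f (ψ σ (xx n)) : ℝ≥0) : ℝ)| ≤ _
        rw [NNReal.abs_eq]
        exact_mod_cast RMKaux.le_bnd f _
      have hzg : (z n g : ℝ) = (T n)⁻¹ * ∫ τ in (0:ℝ)..(T n), F (τ + s) := by
        rw [hzcoe n g]
        congr 1
        apply intervalIntegral.integral_congr
        intro τ _
        show ((g (ψ τ (xx n)) : ℝ)) = F (τ + s)
        rw [hgF, hF]
        have : ψ s (ψ τ (xx n)) = ψ (τ + s) (xx n) := by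
          have h1 := hflow.2.1 τ s
          have := congrFun h1 (xx n)
          simpa [Function.comp, add_comm] using this
        rw [this]
      have hshiftint : ∫ τ in (0:ℝ)..(T n), F (τ + s) = ∫ σ in s..(T n + s), F σ := by
        rw [intervalIntegral.integral_comp_add_right]
        norm_num
      have hsplit : (∫ σ in s..(T n + s), F σ) - (∫ τ in (0:ℝ)..(T n), F τ)
          = (∫ σ in (T n)..(T n + s), F σ) - ∫ σ in (0:ℝ)..s, F σ := by
        have h1 : (∫ σ in s..(T n), F σ) + (∫ σ in (T n)..(T n + s), F σ)
            = ∫ σ in s..(T n + s), F σ :=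
          intervalIntegral.integral_add_adjacent_intervals (hFii _ _) (hFii _ _)
        have h2 : (∫ σ in (0:ℝ)..s, F σ) + (∫ σ in s..(T n), F σ)
            = ∫ σ in (0:ℝ)..(T n), F σ :=
          intervalIntegral.integral_add_adjacent_intervals (hFii _ _) (hFii _ _)
        rw [← h1, ← h2]
        ring
      have hbd1 : |∫ σ in (T n)..(T n + s), F σ| ≤ (RMKaux.bnd f : ℝ) * s := by
        have := intervalIntegral.norm_integral_le_of_norm_le_const
          (C := (RMKaux.bnd f : ℝ)) (f := F) (a := T n) (b := T n + s)
          (fun σ _ => by rw [Real.norm_eq_abs]; exact hFbd σ)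
        rw [Real.norm_eq_abs] at this
        simpa [abs_of_nonneg hs] using this
      have hbd2 : |∫ σ in (0:ℝ)..s, F σ| ≤ (RMKaux.bnd f : ℝ) * s := by
        have := intervalIntegral.norm_integral_le_of_norm_le_const
          (C := (RMKaux.bnd f : ℝ)) (f := F) (a := (0:ℝ)) (b := s)
          (fun σ _ => by rw [Real.norm_eq_abs]; exact hFbd σ)
        rw [Real.norm_eq_abs] at this
        simpa [abs_of_nonneg hs] using this
      have hzf : (z n f : ℝ) = (T n)⁻¹ * ∫ τ in (0:ℝ)..(T n), F τ := hzcoe n f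
      rw [hzg, hzf, ← mul_sub, abs_mul, abs_of_nonneg (inv_nonneg.mpr (hTpos n).le),
        hshiftint, hsplit]
      have habs : |(∫ σ in (T n)..(T n + s), F σ) - ∫ σ in (0:ℝ)..s, F σ|
          ≤ 2 * (RMKaux.bnd f : ℝ) * s := by
        calc |(∫ σ in (T n)..(T n + s), F σ) - ∫ σ in (0:ℝ)..s, F σ|
            ≤ |∫ σ in (T n)..(T n + s), F σ| + |∫ σ in (0:ℝ)..s, F σ| := abs_sub _ _
          _ ≤ (RMKaux.bnd f : ℝ) * s + (RMKaux.bnd f : ℝ) * s := add_le_add hbd1 hbd2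
          _ = 2 * (RMKaux.bnd f : ℝ) * s := by ring
      calc (T n)⁻¹ * |(∫ σ in (T n)..(T n + s), F σ) - ∫ σ in (0:ℝ)..s, F σ|
          ≤ (T n)⁻¹ * (2 * (RMKaux.bnd f : ℝ) * s) :=
            mul_le_mul_of_nonneg_left habs (inv_nonneg.mpr (hTpos n).le)
        _ ≤ ((n:ℝ)+1)⁻¹ * (2 * (RMKaux.bnd f : ℝ) * s) := by
            apply mul_le_mul_of_nonneg_right _ (by positivity)
            exact inv_anti₀ (by positivity) (hT n)
        _ = 2 * (RMKaux.bnd f : ℝ) * s / ((n:ℝ)+1) := by ring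
    -- each ε-approximation set is closed and eventually contains z n
    have hboth : ∀ ε : ℝ≥0, 0 < ε → (w g ≤ w f + ε ∧ w f ≤ w g + ε) := by
      intro ε hε
      have hc1 : IsClosed {w' : (Torus d →ᵇ ℝ≥0) → ℝ≥0 | w' g ≤ w' f + ε} :=
        isClosed_le (continuous_apply g) (Continuous.add (continuous_apply f) continuous_const)
      have hc2 : IsClosed {w' : (Torus d →ᵇ ℝ≥0) → ℝ≥0 | w' f ≤ w' g + ε} :=
        isClosed_le (continuous_apply f) (Continuous.add (continuous_apply g) continuous_const)
      refine transfer ({w' : (Torus d →ᵇ ℝ≥0) → ℝ≥0 | w' g ≤ w' f + ε} ∩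
        {w' : (Torus d →ᵇ ℝ≥0) → ℝ≥0 | w' f ≤ w' g + ε}) (hc1.inter hc2) ?_
      have hto : Filter.Tendsto (fun n : ℕ => 2 * (RMKaux.bnd f : ℝ) * s / ((n:ℝ)+1))
          Filter.atTop (nhds 0) := by
        apply Filter.Tendsto.div_atTop tendsto_const_nhds
        exact Filter.tendsto_atTop_add_const_right _ 1 tendsto_natCast_atTop_atTop
      filter_upwards [hto.eventually (gt_mem_nhds (by exact_mod_cast hε : (0:ℝ) < (ε:ℝ)))]
        with n hn
      have hd := (hdiff n).trans hn.le
      constructor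
      · show z n g ≤ z n f + ε
        rw [← NNReal.coe_le_coe]
        push_cast
        have := abs_le.mp ((hdiff n).trans hn.le)
        linarith [this.2]
      · show z n f ≤ z n g + ε
        rw [← NNReal.coe_le_coe]
        push_cast
        have := abs_le.mp ((hdiff n).trans hn.le)
        linarith [this.1]
    have : (w g : ℝ) = w f := by
      refine le_antisymm ?_ ?_
      · refine le_of_forall_pos_le_add fun ε hε => ?_
        have h1 := (hboth (Real.toNNReal ε) (by simp [hε])).1
        rw [← NNReal.coe_le_coe] at h1
        push_cast at h1
        rwa [Real.coe_toNNReal _ hε.le] at h1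
      · refine le_of_forall_pos_le_add fun ε hε => ?_
        have h1 := (hboth (Real.toNNReal ε) (by simp [hε])).2
        rw [← NNReal.coe_le_coe] at h1
        push_cast at h1
        rwa [Real.coe_toNNReal _ hε.le] at h1
    exact NNReal.coe_injective this
  -- package as a linear functional and get the Riesz measure
  set Λ : (Torus d →ᵇ ℝ≥0) →ₗ[ℝ≥0] ℝ≥0 :=
    { toFun := w
      map_add' := hwadd
      map_smul' := hwsmul } with hΛ
  set Q : Measure (Torus d) := RMKaux.rieszMeasure Λ with hQdef
  haveI hQprob : IsProbabilityMeasure Q := RMKaux.isProbability_rieszMeasure Λ hwone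
  have hQlint : ∀ f : Torus d →ᵇ ℝ≥0, ∫⁻ x, (f x : ℝ≥0∞) ∂Q = ((Λ f : ℝ≥0) : ℝ≥0∞) :=
    RMKaux.lintegral_rieszMeasure Λ
  -- invariance of Q
  have hmap : ∀ (s : ℝ), 0 ≤ s → Q.map (ψ s) = Q := by
    intro s hs
    haveI : IsProbabilityMeasure (Q.map (ψ s)) :=
      Measure.isProbabilityMeasure_map (hψmp s).measurable.aemeasurable
    refine ext_of_forall_lintegral_eq_of_IsFiniteMeasure ?_
    intro f
    have hmf : Measurable fun a : Torus d => ((f a : ℝ≥0) : ℝ≥0∞) := by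
      exact (ENNReal.continuous_coe.comp f.continuous).measurable
    rw [lintegral_map hmf (hψmp s).measurable]
    have heq : (fun a => (f (ψ s a) : ℝ≥0∞))
        = fun a => ((f.compContinuous ⟨ψ s, FlowAux.flow_continuous hflow hv hs⟩) a : ℝ≥0∞) :=
      rfl
    rw [heq, hQlint, hQlint]
    exact congrArg (fun r : ℝ≥0 => (r : ℝ≥0∞)) (hshift s hs f)
  have hinvQ : ∀ t : ℝ, ∀ A : Set (Torus d), MeasurableSet A → Q (ψ t ⁻¹' A) = Q A := by
    intro t A hA
    rcases le_or_gt 0 t with ht | ht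
    · have h1 := Measure.map_apply (μ := Q) (hψmp t).measurable hA
      rw [hmap t ht] at h1
      exact h1.symm
    · have hs : 0 ≤ -t := by linarith
      have h1 := Measure.map_apply (μ := Q) (hψmp (-t)).measurable ((hψmp t).measurable hA)
      rw [hmap (-t) hs] at h1
      have h2 : ψ (-t) ⁻¹' (ψ t ⁻¹' A) = A := by
        rw [← Set.preimage_comp, hflow.2.1 (-t) t]
        have ht0 : t + -t = 0 := by ring
        rw [ht0]
        ext y
        simp [hflow.1 y]
      rw [h2] at h1
      exact h1
  have hQvol : Q = (volume : Measure (Torus d)) := huniq Q hQprob hinvQ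
  -- contradiction with the average of φ
  have hφint : Integrable φ (volume : Measure (Torus d)) := by
    have := (BoundedContinuousFunction.mkOfCompact ⟨φ, hφcont⟩).integrable
      (μ := (volume : Measure (Torus d)))
    exact this
  have h1 : (∫⁻ x, ((φb x : ℝ≥0) : ℝ≥0∞) ∂Q) ≤ ENNReal.ofReal μ := by
    rw [hQlint φb]
    exact ENNReal.coe_le_coe.mpr hwφ
  rw [hQvol] at h1
  have h2 : ∫⁻ x, ((φb x : ℝ≥0) : ℝ≥0∞) ∂(volume : Measure (Torus d))
      = ENNReal.ofReal (∫ x, φ x ∂(volume : Measure (Torus d))) :=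
    (MeasureTheory.ofReal_integral_eq_lintegral_ofReal hφint
      (Filter.Eventually.of_forall hφ0)).symm
  rw [h2] at h1
  have h3 : (∫ x, φ x ∂(volume : Measure (Torus d))) ≤ μ :=
    (ENNReal.ofReal_le_ofReal_iff hμ0).mp h1
  linarith

end KeyAvg
/-- **Theorem 2.2 (ii): exponential decay for uniquely ergodic flows.**
Let `d ≥ 1`, let `v : 𝕋^d → ℝ^d` be a Lipschitz divergence-free vector field (so its flow `ψ`
preserves the Lebesgue measure) whose flow is uniquely ergodic, and let `φ ≥ 0` be continuous
with `⟨φ⟩ > 0`.  Let `p ∈ [1,∞]`, `θ₀ ∈ L^p(𝕋^d)`, and let `θ` be the solution of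
`∂_t θ + v·∇θ = -φ θ`, `θ(0,·) = θ₀`, given along characteristics by
`θ(t,ψ(t,x)) = θ₀(x) exp(-∫_0^t φ(ψ(τ,x)) dτ)`.  Then for every `μ ∈ [0,⟨φ⟩)` there exists
`T₀ > 0` such that `‖θ(t)‖_{L^p} ≤ ‖θ₀‖_{L^p} e^{-μ t}` for every `t ≥ T₀`. -/
theorem transport_damped_uniquely_ergodic_exponential_decay
    (d : ℕ) (hd : 1 ≤ d)
    (v : Torus d → Fin d → ℝ) (K : NNReal) (hv : LipschitzWith K v)
    (ψ : ℝ → Torus d → Torus d) (hflow : IsFlowOf d v ψ)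
    -- `v` is divergence free: the flow preserves the normalized Lebesgue measure
    (hψmp : ∀ t : ℝ, MeasurePreserving (ψ t) volume volume)
    -- the flow is uniquely ergodic: `volume` is its only invariant Borel probability measure
    (huniq : ∀ μ : Measure (Torus d), IsProbabilityMeasure μ →
      (∀ t : ℝ, ∀ A : Set (Torus d), MeasurableSet A → μ (ψ t ⁻¹' A) = μ A) →
      μ = (volume : Measure (Torus d)))
    (φ : Torus d → ℝ) (hφ0 : ∀ x, 0 ≤ φ x) (hφcont : Continuous φ)
    (hφavg : 0 < ∫ x, φ x ∂(volume : Measure (Torus d)))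
    (p : ENNReal) (hp : 1 ≤ p)
    (θ₀ : Torus d → ℝ) (hθ₀ : MemLp θ₀ p (volume : Measure (Torus d)))
    (θ : ℝ → Torus d → ℝ)
    (hθ : ∀ t : ℝ, ∀ x : Torus d,
      θ t (ψ t x) = θ₀ x * Real.exp (-∫ τ in (0:ℝ)..t, φ (ψ τ x)))
    (μ : ℝ) (hμ0 : 0 ≤ μ) (hμ : μ < ∫ x, φ x ∂(volume : Measure (Torus d))) :
    ∃ T₀ : ℝ, 0 < T₀ ∧ ∀ t : ℝ, T₀ ≤ t →
      eLpNorm (θ t) p (volume : Measure (Torus d)) ≤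
        eLpNorm θ₀ p (volume : Measure (Torus d)) * ENNReal.ofReal (Real.exp (-μ * t)) := by
  obtain ⟨T₀, hT₀pos, hT₀⟩ :=
    uniform_average_bound d v K hv ψ hflow hψmp huniq φ hφ0 hφcont μ hμ0 hμ
  refine ⟨T₀, hT₀pos, fun t ht => ?_⟩
  have hid : ∀ y : Torus d, ψ t (ψ (-t) y) = y := by
    intro y
    have h1 := congrFun (hflow.2.1 (-t) t) y
    simp only [Function.comp] at h1
    rw [h1]
    have ht0 : t + -t = 0 := by ring
    rw [ht0, hflow.1 y]
  have hpt : ∀ y : Torus d, ‖θ t y‖ ≤ ‖Real.exp (-μ * t) * θ₀ (ψ (-t) y)‖ := by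
    intro y
    have h1 := hθ t (ψ (-t) y)
    rw [hid y] at h1
    rw [h1, Real.norm_eq_abs, Real.norm_eq_abs, abs_mul, abs_mul,
      abs_of_pos (Real.exp_pos _), abs_of_pos (Real.exp_pos _)]
    have h2 : Real.exp (-∫ τ in (0:ℝ)..t, φ (ψ τ (ψ (-t) y))) ≤ Real.exp (-μ * t) := by
      apply Real.exp_le_exp.mpr
      have := hT₀ t ht (ψ (-t) y)
      linarith
    calc |θ₀ (ψ (-t) y)| * Real.exp (-∫ τ in (0:ℝ)..t, φ (ψ τ (ψ (-t) y)))
        ≤ |θ₀ (ψ (-t) y)| * Real.exp (-μ * t) :=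
          mul_le_mul_of_nonneg_left h2 (abs_nonneg _)
      _ = Real.exp (-μ * t) * |θ₀ (ψ (-t) y)| := mul_comm _ _
  calc eLpNorm (θ t) p (volume : Measure (Torus d))
      ≤ eLpNorm (fun y => Real.exp (-μ * t) * θ₀ (ψ (-t) y)) p (volume : Measure (Torus d)) :=
        eLpNorm_mono hpt
    _ = eLpNorm (Real.exp (-μ * t) • (θ₀ ∘ ψ (-t))) p (volume : Measure (Torus d)) := rfl
    _ = ‖Real.exp (-μ * t)‖ₑ * eLpNorm (θ₀ ∘ ψ (-t)) p (volume : Measure (Torus d)) :=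
        eLpNorm_const_smul _ _ _ _
    _ = ‖Real.exp (-μ * t)‖ₑ * eLpNorm θ₀ p (volume : Measure (Torus d)) := by
        rw [eLpNorm_comp_measurePreserving hθ₀.1 (hψmp (-t))]
    _ = eLpNorm θ₀ p (volume : Measure (Torus d)) * ENNReal.ofReal (Real.exp (-μ * t)) := by
        rw [mul_comm]
        congr 1
        exact (Real.enorm_eq_ofReal (Real.exp_pos _).le)

end
end

section
/- Let d ≥ 1, let v : 𝕋^d → ℝ^d be a Lipschitz divergence-free vector field with flow ψ, let φ : 𝕋^d → ℝ be a nonnegative integrable function, and let φ_* be the almost-everywhere limit of the Birkhoff averages (1/t)∫_0^t φ(ψ(τ,·)) dτ as t → +∞. Assume φ_*(x) > 0 for almost every x. Let p ∈ [1,∞), θ_0 ∈ L^p(𝕋^d), and let θ be the solution of ∂_t θ + v·∇θ = −φ θ with θ(0,·) = θ_0, i.e. θ(t,ψ(t,x)) = θ_0(x) exp(−∫_0^t φ(ψ(τ,x)) dτ). Then ‖θ(t)‖_{L^p} → 0 as t → +∞. -/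
open MeasureTheory Filter Topology

noncomputable section

/-- **Theorem 2.2 (iii): decay of the energy when the Birkhoff limit is a.e. positive.**
Let `d ≥ 1`, let `v : 𝕋^d → ℝ^d` be a Lipschitz divergence-free vector field (so its flow `ψ`
preserves the Lebesgue measure), let `φ ≥ 0` be integrable, and let `φ_*` be the a.e. limit of
the Birkhoff averages `(1/t)∫_0^t φ(ψ(τ,·)) dτ` as `t → +∞`.  Assume `φ_*(x) > 0` for a.e. `x`.
Let `p ∈ [1,∞)`, `θ₀ ∈ L^p(𝕋^d)`, and let `θ` be the solution of `∂_t θ + v·∇θ = -φ θ`,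
`θ(0,·) = θ₀`, given by `θ(t,ψ(t,x)) = θ₀(x) exp(-∫_0^t φ(ψ(τ,x)) dτ)`.
Then `‖θ(t)‖_{L^p} → 0` as `t → +∞`. -/
theorem transport_damped_decay_of_positive_birkhoff_limit
    (d : ℕ) (hd : 1 ≤ d)
    (v : Torus d → Fin d → ℝ) (K : NNReal) (hv : LipschitzWith K v)
    (ψ : ℝ → Torus d → Torus d) (hflow : IsFlowOf d v ψ)
    -- `v` is divergence free: the flow preserves the normalized Lebesgue measure
    (hψmp : ∀ t : ℝ, MeasurePreserving (ψ t) volume volume)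
    (φ : Torus d → ℝ) (hφ0 : ∀ x, 0 ≤ φ x)
    (hφint : Integrable φ (volume : Measure (Torus d)))
    (φs : Torus d → ℝ)
    (hlim : ∀ᵐ x ∂(volume : Measure (Torus d)),
      Tendsto (fun t : ℝ => (1 / t) * ∫ τ in (0:ℝ)..t, φ (ψ τ x)) atTop (𝓝 (φs x)))
    (hφspos : ∀ᵐ x ∂(volume : Measure (Torus d)), 0 < φs x)
    (p : ℝ) (hp : 1 ≤ p)
    (θ₀ : Torus d → ℝ) (hθ₀ : MemLp θ₀ (ENNReal.ofReal p) (volume : Measure (Torus d)))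
    (θ : ℝ → Torus d → ℝ)
    (hθ : ∀ t : ℝ, ∀ x : Torus d,
      θ t (ψ t x) = θ₀ x * Real.exp (-∫ τ in (0:ℝ)..t, φ (ψ τ x))) :
    Tendsto (fun t : ℝ => eLpNorm (θ t) (ENNReal.ofReal p) (volume : Measure (Torus d)))
      atTop (𝓝 0) := by
  obtain ⟨hψ0, hψadd, hlift⟩ := hflow
  have hp0 : (0:ℝ) < p := lt_of_lt_of_le one_pos hp
  set q : ENNReal := ENNReal.ofReal p with hqdef
  have hq0 : q ≠ 0 := by
    simp only [hqdef, ne_eq, ENNReal.ofReal_eq_zero, not_le]; exact hp0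
  have hqtop : q ≠ ⊤ := ENNReal.ofReal_ne_top
  have hqto : q.toReal = p := ENNReal.toReal_ofReal hp0.le
  -- continuity of orbits
  have hcont : ∀ x, Continuous fun t => ψ t x := by
    intro x
    obtain ⟨X, hX, hX'⟩ := hlift x
    have hXc : Continuous X :=
      continuous_iff_continuousAt.2 fun t => (hX' t).continuousAt
    have heq : (fun t => ψ t x) = fun t => Torus.proj d (X t) := by
      funext t; exact (hX t).symm
    rw [heq]
    exact (continuous_pi fun i =>
      (AddCircle.continuous_mk' (1:ℝ)).comp (continuous_apply i)).comp hXc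
  have hum : Measurable (Function.uncurry ψ) :=
    measurable_uncurry_of_continuous_of_measurable hcont fun t => (hψmp t).measurable
  -- the exponent along characteristics, as a set integral
  set J : ℝ → Torus d → ℝ := fun t x => ∫ τ in Set.Ioc (0:ℝ) t, φ (ψ τ x) with hJdef
  set g : ℝ → Torus d → ℝ := fun t x => θ₀ x * Real.exp (-(J t x)) with hgdef
  have hJnonneg : ∀ t x, 0 ≤ J t x := fun t x =>
    integral_nonneg fun τ => hφ0 _
  -- a.e.-measurability of `J t`
  have hJmeas : ∀ t : ℝ, AEStronglyMeasurable (J t) volume := by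
    intro t
    set μ : Measure ℝ := volume.restrict (Set.Ioc (0:ℝ) t) with hμdef
    have hΦ : MeasurePreserving (fun p : ℝ × Torus d => (p.1, ψ p.1 p.2))
        (μ.prod volume) (μ.prod volume) :=
      MeasurePreserving.skew_product (MeasurePreserving.id μ) hum
        (Filter.Eventually.of_forall fun τ => (hψmp τ).map_eq)
    have h1 : AEStronglyMeasurable (fun p : ℝ × Torus d => φ p.2) (μ.prod volume) :=
      hφint.1.comp_quasiMeasurePreserving Measure.quasiMeasurePreserving_snd
    have hF : AEStronglyMeasurable (fun p : ℝ × Torus d => φ (ψ p.1 p.2)) (μ.prod volume) :=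
      h1.comp_quasiMeasurePreserving hΦ.quasiMeasurePreserving
    have hFs : AEStronglyMeasurable (fun p : Torus d × ℝ => φ (ψ p.2 p.1))
        ((volume : Measure (Torus d)).prod μ) :=
      hF.comp_quasiMeasurePreserving Measure.measurePreserving_swap.quasiMeasurePreserving
    exact hFs.integral_prod_right'
  have hgmeas : ∀ t : ℝ, AEStronglyMeasurable (g t) volume := by
    intro t
    exact hθ₀.1.mul ((Real.continuous_exp.comp continuous_neg).comp_aestronglyMeasurable
      (hJmeas t))
  -- a.e. pointwise decay
  have hae : ∀ᵐ x ∂(volume : Measure (Torus d)), Tendsto (fun t => g t x) atTop (𝓝 0) := by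
    filter_upwards [hlim, hφspos] with x hx hpos
    have h1 : Tendsto (fun t : ℝ => J t x) atTop atTop := by
      have h2 : Tendsto
          (fun t : ℝ => ((1 / t) * ∫ τ in (0:ℝ)..t, φ (ψ τ x)) * t) atTop atTop :=
        hx.pos_mul_atTop hpos tendsto_id
      refine h2.congr' ?_
      filter_upwards [eventually_gt_atTop (0:ℝ)] with t ht
      have hIoc : (∫ τ in (0:ℝ)..t, φ (ψ τ x)) = J t x :=
        intervalIntegral.integral_of_le ht.le
      rw [hIoc]; field_simp
    have h3 : Tendsto (fun t => Real.exp (-(J t x))) atTop (𝓝 0) :=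
      Real.tendsto_exp_atBot.comp (tendsto_neg_atTop_atBot.comp h1)
    have h4 : Tendsto (fun _ : ℝ => θ₀ x) atTop (𝓝 (θ₀ x)) := tendsto_const_nhds
    simpa using h4.mul h3
  -- the lintegral of |g t|^p
  set F : ℝ → Torus d → ENNReal := fun t x => (‖g t x‖₊ : ENNReal) ^ p with hFdef
  have hcontF : Continuous fun y : ℝ => (‖y‖₊ : ENNReal) ^ p :=
    ENNReal.continuous_rpow_const.comp (ENNReal.continuous_coe.comp continuous_nnnorm)
  have hFlim : ∀ᵐ x ∂(volume : Measure (Torus d)),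
      Tendsto (fun t => F t x) atTop (𝓝 0) := by
    filter_upwards [hae] with x hx
    have := (hcontF.tendsto 0).comp hx
    exact (by simpa [ENNReal.zero_rpow_of_pos hp0] using this :
      Tendsto ((fun y : ℝ => (‖y‖₊ : ENNReal) ^ p) ∘ fun t => g t x) atTop (𝓝 0))
  have hbound : ∀ t x, F t x ≤ (‖θ₀ x‖₊ : ENNReal) ^ p := by
    intro t x
    have h1 : ‖g t x‖₊ ≤ ‖θ₀ x‖₊ := by
      have : |g t x| ≤ |θ₀ x| := by
        rw [hgdef]
        simp only [abs_mul, Real.abs_exp]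
        have : Real.exp (-(J t x)) ≤ 1 :=
          Real.exp_le_one_iff.2 (neg_nonpos.2 (hJnonneg t x))
        exact mul_le_of_le_one_right (abs_nonneg _) this
      rw [← NNReal.coe_le_coe]
      simpa [coe_nnnorm, Real.norm_eq_abs] using this
    exact ENNReal.rpow_le_rpow (ENNReal.coe_le_coe.2 h1) hp0.le
  have hfin : (∫⁻ x, (‖θ₀ x‖₊ : ENNReal) ^ p ∂(volume : Measure (Torus d))) ≠ ⊤ := by
    intro hcontra
    have h2 := hθ₀.2
    rw [eLpNorm_eq_lintegral_rpow_enorm_toReal hq0 hqtop, hqto] at h2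
    simp only [enorm_eq_nnnorm] at h2
    rw [hcontra] at h2
    rw [ENNReal.top_rpow_of_pos (by positivity)] at h2
    exact absurd h2 (lt_irrefl _)
  have hFmeas : ∀ t : ℝ, AEMeasurable (F t) volume := fun t =>
    (ENNReal.continuous_rpow_const.measurable).comp_aemeasurable (hgmeas t).enorm
  have key : Tendsto (fun t : ℝ => ∫⁻ x, F t x ∂(volume : Measure (Torus d)))
      atTop (𝓝 0) := by
    rw [tendsto_iff_seq_tendsto]
    intro u hu
    have := tendsto_lintegral_of_dominated_convergence'
      (μ := (volume : Measure (Torus d))) (F := fun n => F (u n)) (f := fun _ => 0)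
      (fun x => (‖θ₀ x‖₊ : ENNReal) ^ p)
      (fun n => hFmeas (u n))
      (fun n => Filter.Eventually.of_forall fun x => hbound (u n) x)
      hfin ?_
    · exact (by simpa using this : Tendsto (fun n => ∫⁻ a, F (u n) a ∂volume) atTop (𝓝 0))
    · filter_upwards [hFlim] with x hx
      exact hx.comp hu
  -- conclude
  have hfinal : Tendsto
      (fun t : ℝ => (∫⁻ x, F t x ∂(volume : Measure (Torus d))) ^ (1/p))
      atTop (𝓝 0) := by
    have hc : Tendsto (fun a : ENNReal => a ^ (1/p)) (𝓝 0) (𝓝 0) := by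
      have := (ENNReal.continuous_rpow_const (y := 1/p)).tendsto 0
      simpa [one_div, ENNReal.zero_rpow_of_pos (by positivity : (0:ℝ) < p⁻¹)] using this
    exact hc.comp key
  refine Tendsto.congr' ?_ hfinal
  filter_upwards [eventually_ge_atTop (0:ℝ)] with t ht
  have hθeq : θ t = (g t) ∘ (ψ (-t)) := by
    funext y
    have h1 : ψ t (ψ (-t) y) = y := by
      have h2 := congrFun (hψadd (-t) t) y
      simp only [Function.comp_apply, add_neg_cancel] at h2
      rw [h2, hψ0]
    calc θ t y = θ t (ψ t (ψ (-t) y)) := by rw [h1]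
      _ = θ₀ (ψ (-t) y) * Real.exp (-∫ τ in (0:ℝ)..t, φ (ψ τ (ψ (-t) y))) := hθ t _
      _ = g t (ψ (-t) y) := by
          rw [hgdef]; simp only [hJdef]
          rw [intervalIntegral.integral_of_le ht]
  have heq2 : eLpNorm (θ t) q volume = eLpNorm (g t) q volume := by
    rw [hθeq]
    exact eLpNorm_comp_measurePreserving (hgmeas t) (hψmp (-t))
  rw [heq2, eLpNorm_eq_lintegral_rpow_enorm_toReal hq0 hqtop, hqto]
  rfl

end
end
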